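/- arXiv:2209.13119 — 7 statements merged into one kernel-verified Lean document; each statement's English description precedes it below -/
import Mathlib

section
/- Let n and m be nonempty finite types. Let w : n → n → ℝ be a weight function with 0 ≤ w i j for all i, j and w i i = 0, whose graph is strongly connected, and let L be its Laplacian. Let Δt : ℝ with 0 < Δt, and set A = Matrix.exp ℝ (-(Δt • L)). Let C : Matrix m n ℝ be an output matrix having at least one nonzero row sum, i.e. there exists i : m with ∑ j, C i j ≠ 0. Then the pair (A, C) is uniformly detectable: there exist p q : ℕ and a b : ℝ with 0 ≤ a < 1 and 0 < b such that for every ζ : n → ℝ satisfying a * ‖ζ‖ ≤ ‖(A ^ p) *ᵥ ζ‖, one has b * (ζ ⬝ᵥ ζ) ≤ ∑ i in Finset.range (q + 1), (C *ᵥ ((A ^ i) *ᵥ ζ)) ⬝ᵥ (C *ᵥ ((A ^ i) *ᵥ ζ)). -/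
open Matrix Finset NormedSpace

section aux
variable {n : Type*} [Fintype n] [DecidableEq n]

noncomputable def entryLM (i j : n) : Matrix n n ℝ →ₗ[ℝ] ℝ :=
  (LinearMap.proj j).comp ((LinearMap.proj i : (n → n → ℝ) →ₗ[ℝ] (n → ℝ)))

@[simp] lemma entryLM_apply (i j : n) (X : Matrix n n ℝ) : entryLM i j X = X i j := rfl

noncomputable def mvLM (v : n → ℝ) (i : n) : Matrix n n ℝ →ₗ[ℝ] ℝ where
  toFun X := (X *ᵥ v) i
  map_add' X Y := by simp [Matrix.add_mulVec]
  map_smul' c X := by simp [Matrix.smul_mulVec]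

@[simp] lemma mvLM_apply (v : n → ℝ) (i : n) (X : Matrix n n ℝ) : mvLM v i X = (X *ᵥ v) i := rfl

lemma linmap_exp (B : Matrix n n ℝ) (f : Matrix n n ℝ →ₗ[ℝ] ℝ) :
    f (NormedSpace.exp B) = ∑' k : ℕ, ((k.factorial : ℝ)⁻¹) * f (B ^ k) := by
  letI : SeminormedRing (Matrix n n ℝ) := Matrix.linftyOpSemiNormedRing
  letI : NormedRing (Matrix n n ℝ) := Matrix.linftyOpNormedRing
  letI : NormedAlgebra ℝ (Matrix n n ℝ) := Matrix.linftyOpNormedAlgebra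
  have hf : Continuous f := f.continuous_of_finiteDimensional
  have hs : Summable fun k : ℕ => ((k.factorial : ℝ)⁻¹) • B ^ k := expSeries_summable' B
  rw [exp_eq_tsum ℝ]
  rw [(hs.hasSum.map f hf).tsum_eq.symm]
  congr 1
  ext k
  simp [_root_.map_smul, smul_eq_mul]

lemma linmap_exp_summable (B : Matrix n n ℝ) (f : Matrix n n ℝ →ₗ[ℝ] ℝ) :
    Summable fun k : ℕ => ((k.factorial : ℝ)⁻¹) * f (B ^ k) := by
  letI : SeminormedRing (Matrix n n ℝ) := Matrix.linftyOpSemiNormedRing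
  letI : NormedRing (Matrix n n ℝ) := Matrix.linftyOpNormedRing
  letI : NormedAlgebra ℝ (Matrix n n ℝ) := Matrix.linftyOpNormedAlgebra
  have hf : Continuous f := f.continuous_of_finiteDimensional
  have hs : Summable fun k : ℕ => ((k.factorial : ℝ)⁻¹) • B ^ k := expSeries_summable' B
  have := (hs.hasSum.map f hf).summable
  simpa [Function.comp_def, _root_.map_smul, smul_eq_mul] using this

end aux

lemma exp_lap_facts {n : Type*} [Fintype n] [Nonempty n] [DecidableEq n]
    (w : n → n → ℝ) (hw : ∀ i j, 0 ≤ w i j) (hdiag : ∀ i, w i i = 0)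
    (hconn : ∀ i j, Relation.ReflTransGen (fun a b => 0 < w a b) i j)
    (L : Matrix n n ℝ)
    (hL : ∀ i j, L i j = if i = j then ∑ k, w i k else -(w i j))
    (Δt : ℝ) (hΔt : 0 < Δt) :
    (∀ i j, 0 < (NormedSpace.exp (-(Δt • L))) i j) ∧
    (∀ i, ∑ j, (NormedSpace.exp (-(Δt • L))) i j = 1) := by
  set S : ℝ := ∑ i, ∑ k, w i k with hS
  set G : Matrix n n ℝ := Matrix.of fun i j => if i = j then S - ∑ k, w i k else w i j with hG
  have hdegS : ∀ i, (∑ k, w i k) ≤ S := by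
    intro i
    exact Finset.single_le_sum (f := fun i => ∑ k, w i k)
      (fun i _ => Finset.sum_nonneg fun k _ => hw i k) (mem_univ i)
  have hGd : ∀ i, G i i = S - ∑ k, w i k := fun i => if_pos rfl
  have hGo : ∀ i j, i ≠ j → G i j = w i j := fun i j h => if_neg h
  have hGnn : ∀ i j, 0 ≤ G i j := by
    intro i j
    by_cases h : i = j
    · subst h; rw [hGd i]; linarith [hdegS i]
    · rw [hGo i j h]; exact hw i j
  have hdecomp : -(Δt • L) = Δt • G + (-(Δt * S)) • (1 : Matrix n n ℝ) := by
    ext i j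
    by_cases h : i = j
    · subst h
      simp [hL, hG, Matrix.one_apply]
      ring
    · simp [hL, hG, h, Matrix.one_apply, if_neg h]
  -- exp of the scalar part
  have hexp1 : NormedSpace.exp ((-(Δt * S)) • (1 : Matrix n n ℝ))
      = Real.exp (-(Δt * S)) • (1 : Matrix n n ℝ) := by
    have hpi : (NormedSpace.exp (fun _ : n => -(Δt * S))) = fun _ : n => Real.exp (-(Δt * S)) := by
      rw [Pi.exp_def]
      funext x
      exact (congrFun Real.exp_eq_exp_ℝ _).symm
    rw [Matrix.smul_one_eq_diagonal, Matrix.exp_diagonal, hpi, Matrix.smul_one_eq_diagonal]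
  have hcomm : Commute (Δt • G) ((-(Δt * S)) • (1 : Matrix n n ℝ)) :=
    ((Commute.one_right (Δt • G)).smul_right _)
  have hsplit : NormedSpace.exp (-(Δt • L)) = Real.exp (-(Δt * S)) • NormedSpace.exp (Δt • G) := by
    rw [hdecomp, Matrix.exp_add_of_commute _ _ hcomm, hexp1, mul_smul_comm, mul_one]
  -- entries of (Δt • G)^k are nonneg
  have hpow_nn : ∀ k : ℕ, ∀ i j, 0 ≤ ((Δt • G) ^ k) i j := by
    intro k
    induction k with
    | zero => intro i j; by_cases h : i = j <;> simp [Matrix.one_apply, h]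
    | succ k ih =>
      intro i j
      rw [pow_succ, Matrix.mul_apply]
      apply Finset.sum_nonneg
      intro x _
      exact mul_nonneg (ih i x) (by simpa using mul_nonneg hΔt.le (hGnn x j))
  -- positivity from connectivity
  have hpath : ∀ i j, ∃ k : ℕ, 0 < ((Δt • G) ^ k) i j := by
    intro i j
    induction hconn i j with
    | refl => exact ⟨0, by simp [Matrix.one_apply]⟩
    | @tail b c hab hbc ih =>
      obtain ⟨k, hk⟩ := ih
      refine ⟨k + 1, ?_⟩
      rw [pow_succ, Matrix.mul_apply]
      have hbc' : b ≠ c := by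
        rintro rfl
        exact absurd (hdiag b) (ne_of_gt hbc)
      have hGbc : 0 < (Δt • G) b c := by
        have : G b c = w b c := by simp [hG, if_neg hbc']
        simp only [Matrix.smul_apply, smul_eq_mul, this]
        exact mul_pos hΔt hbc
      have hterm : 0 < ((Δt • G) ^ k) i b * (Δt • G) b c := mul_pos hk hGbc
      refine lt_of_lt_of_le hterm ?_
      have hnn : ∀ x, 0 ≤ (Δt • G) x c := fun x => by
        simpa using mul_nonneg hΔt.le (hGnn x c)
      exact Finset.single_le_sum (f := fun x => ((Δt • G) ^ k) i x * (Δt • G) x c)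
        (fun x _ => mul_nonneg (hpow_nn k i x) (hnn x)) (mem_univ b)
  have hEpos : ∀ i j, 0 < (NormedSpace.exp (Δt • G)) i j := by
    intro i j
    have he : (NormedSpace.exp (Δt • G)) i j
        = ∑' k : ℕ, ((k.factorial : ℝ)⁻¹) * ((Δt • G) ^ k) i j := by
      simpa using linmap_exp (Δt • G) (entryLM i j)
    have hsum : Summable fun k : ℕ => ((k.factorial : ℝ)⁻¹) * ((Δt • G) ^ k) i j := by
      simpa using linmap_exp_summable (Δt • G) (entryLM i j)
    obtain ⟨k, hk⟩ := hpath i j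
    have hterm : 0 < ((k.factorial : ℝ)⁻¹) * ((Δt • G) ^ k) i j :=
      mul_pos (by positivity) hk
    rw [he]
    calc (0:ℝ) < ((k.factorial : ℝ)⁻¹) * ((Δt • G) ^ k) i j := hterm
      _ ≤ _ := Summable.le_tsum hsum k fun k' _ =>
          mul_nonneg (by positivity) (hpow_nn k' i j)
  constructor
  · intro i j
    rw [hsplit]
    simp only [Matrix.smul_apply, smul_eq_mul]
    exact mul_pos (Real.exp_pos _) (hEpos i j)
  · -- row sums = 1
    intro i
    have hrowL : ∀ i, ∑ j, L i j = 0 := by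
      intro i
      have : ∀ j, L i j = (if i = j then (∑ k, w i k) + w i j else 0) - w i j := by
        intro j
        rw [hL]
        by_cases h : i = j
        · subst h; simp [hdiag]
        · simp [h]
      rw [Finset.sum_congr rfl fun j _ => this j, Finset.sum_sub_distrib,
        Finset.sum_ite_eq, if_pos (mem_univ i), hdiag]
      ring
    have hB1 : (-(Δt • L)) *ᵥ (fun _ => (1:ℝ)) = 0 := by
      funext i'
      simp only [Matrix.mulVec, dotProduct, Matrix.neg_apply, Matrix.smul_apply,
        smul_eq_mul, mul_one]
      rw [Finset.sum_neg_distrib, ← Finset.mul_sum, hrowL i', mul_zero, neg_zero]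
      rfl
    have key : ∑ j, (NormedSpace.exp (-(Δt • L))) i j
        = mvLM (fun _ => (1:ℝ)) i (NormedSpace.exp (-(Δt • L))) := by
      simp [Matrix.mulVec, dotProduct, mul_one]
    rw [key, linmap_exp]
    have hzero : ∀ k : ℕ, k ≠ 0 →
        ((k.factorial : ℝ)⁻¹) * mvLM (fun _ => (1:ℝ)) i ((-(Δt • L)) ^ k) = 0 := by
      intro k hk
      obtain ⟨k', rfl⟩ := Nat.exists_eq_succ_of_ne_zero hk
      have : ((-(Δt • L)) ^ (k' + 1)) *ᵥ (fun _ => (1:ℝ)) = 0 := by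
        rw [pow_succ, ← Matrix.mulVec_mulVec, hB1, Matrix.mulVec_zero]
      simp [this]
    rw [tsum_eq_single 0 hzero]
    simp

lemma osc_step {n : Type*} [Fintype n] [Nonempty n] (B : Matrix n n ℝ) (ε : ℝ) (hε : 0 ≤ ε)
    (hB : ∀ i j, ε ≤ B i j) (hrow : ∀ i, ∑ j, B i j = 1) (ζ : n → ℝ) (i : n) :
    (B *ᵥ ζ) i ≤ univ.sup' univ_nonempty ζ
        - ε * (univ.sup' univ_nonempty ζ - univ.inf' univ_nonempty ζ) ∧
    univ.inf' univ_nonempty ζ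
        + ε * (univ.sup' univ_nonempty ζ - univ.inf' univ_nonempty ζ) ≤ (B *ᵥ ζ) i := by
  set M := univ.sup' univ_nonempty ζ with hM
  set m := univ.inf' univ_nonempty ζ with hm
  have hle : ∀ j, ζ j ≤ M := fun j => le_sup' ζ (mem_univ j)
  have hge : ∀ j, m ≤ ζ j := fun j => inf'_le ζ (mem_univ j)
  have hBnn : ∀ j, (0:ℝ) ≤ B i j := fun j => le_trans hε (hB i j)
  obtain ⟨j₀, -, hj₀⟩ := exists_mem_eq_inf' univ_nonempty ζ
  obtain ⟨j₁, -, hj₁⟩ := exists_mem_eq_sup' univ_nonempty ζ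
  have hmv : (B *ᵥ ζ) i = ∑ j, B i j * ζ j := by
    simp [Matrix.mulVec, dotProduct]
  constructor
  · have key : ε * (M - m) ≤ ∑ j, B i j * (M - ζ j) := by
      calc ε * (M - m) ≤ B i j₀ * (M - ζ j₀) := by
            have h0 : M - m = M - ζ j₀ := by rw [hm, hj₀]
            rw [h0]
            exact mul_le_mul (hB i j₀) le_rfl (by linarith [hle j₀]) (hBnn j₀)
        _ ≤ ∑ j, B i j * (M - ζ j) := by
            apply Finset.single_le_sum (fun j _ => mul_nonneg (hBnn j) (by linarith [hle j]))
              (mem_univ j₀)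
    have expand : ∑ j, B i j * (M - ζ j) = M - ∑ j, B i j * ζ j := by
      simp only [mul_sub]
      rw [Finset.sum_sub_distrib, ← Finset.sum_mul, hrow i, one_mul]
    rw [hmv]; linarith [key, expand ▸ key]
  · have key : ε * (M - m) ≤ ∑ j, B i j * (ζ j - m) := by
      calc ε * (M - m) ≤ B i j₁ * (ζ j₁ - m) := by
            have h1 : M - m = ζ j₁ - m := by rw [hM, hj₁]
            rw [h1]
            exact mul_le_mul (hB i j₁) le_rfl (by linarith [hge j₁]) (hBnn j₁)
        _ ≤ ∑ j, B i j * (ζ j - m) := by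
            apply Finset.single_le_sum (fun j _ => mul_nonneg (hBnn j) (by linarith [hge j]))
              (mem_univ j₁)
    have expand : ∑ j, B i j * (ζ j - m) = (∑ j, B i j * ζ j) - m := by
      simp only [mul_sub]
      rw [Finset.sum_sub_distrib, ← Finset.sum_mul, hrow i, one_mul]
    rw [hmv]; linarith [expand ▸ key]
lemma osc_pow {n : Type*} [Fintype n] [Nonempty n] [DecidableEq n] (B : Matrix n n ℝ) (ε : ℝ) (hε : 0 ≤ ε)
    (hε1 : ε ≤ 1) (hB : ∀ i j, ε ≤ B i j) (hrow : ∀ i, ∑ j, B i j = 1) (ζ : n → ℝ) (p : ℕ) :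
    (∀ i, univ.inf' univ_nonempty ζ ≤ ((B ^ p) *ᵥ ζ) i ∧
      ((B ^ p) *ᵥ ζ) i ≤ univ.sup' univ_nonempty ζ) ∧
    univ.sup' univ_nonempty ((B ^ p) *ᵥ ζ) - univ.inf' univ_nonempty ((B ^ p) *ᵥ ζ) ≤
      (1 - ε) ^ p * (univ.sup' univ_nonempty ζ - univ.inf' univ_nonempty ζ) := by
  induction p with
  | zero =>
    simp only [pow_zero, Matrix.one_mulVec]
    exact ⟨fun i => ⟨inf'_le ζ (mem_univ i), le_sup' ζ (mem_univ i)⟩, by simp⟩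
  | succ p ih =>
    obtain ⟨hrange, hosc⟩ := ih
    set u := (B ^ p) *ᵥ ζ with hu
    have hpow : (B ^ (p + 1)) *ᵥ ζ = B *ᵥ u := by
      rw [pow_succ', ← Matrix.mulVec_mulVec]
    have hstep := fun i => osc_step B ε hε hB hrow u i
    have hoscu : (0:ℝ) ≤ univ.sup' univ_nonempty u - univ.inf' univ_nonempty u := by
      obtain ⟨j, -, hj⟩ := exists_mem_eq_inf' (univ_nonempty (α := n)) u
      have := le_sup' u (mem_univ j)
      linarith [hj ▸ this]
    have hsup : univ.sup' univ_nonempty (B *ᵥ u) ≤ univ.sup' univ_nonempty u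
        - ε * (univ.sup' univ_nonempty u - univ.inf' univ_nonempty u) :=
      sup'_le _ _ fun i _ => (hstep i).1
    have hinf : univ.inf' univ_nonempty u
        + ε * (univ.sup' univ_nonempty u - univ.inf' univ_nonempty u)
        ≤ univ.inf' univ_nonempty (B *ᵥ u) :=
      le_inf' _ _ fun i _ => (hstep i).2
    have hsupζ : univ.sup' univ_nonempty u ≤ univ.sup' univ_nonempty ζ :=
      sup'_le _ _ fun i _ => (hrange i).2
    have hinfζ : univ.inf' univ_nonempty ζ ≤ univ.inf' univ_nonempty u :=
      le_inf' _ _ fun i _ => (hrange i).1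
    rw [hpow]
    constructor
    · intro i
      have h1 := (hstep i).1
      have h2 := (hstep i).2
      have hi1 := le_sup' u (mem_univ i)
      constructor
      · nlinarith
      · nlinarith
    · calc univ.sup' univ_nonempty (B *ᵥ u) - univ.inf' univ_nonempty (B *ᵥ u)
          ≤ (1 - ε) * (univ.sup' univ_nonempty u - univ.inf' univ_nonempty u) := by nlinarith
        _ ≤ (1 - ε) * ((1 - ε) ^ p * (univ.sup' univ_nonempty ζ - univ.inf' univ_nonempty ζ)) := by
            apply mul_le_mul_of_nonneg_left hosc (by linarith)
        _ = (1 - ε) ^ (p + 1) * (univ.sup' univ_nonempty ζ - univ.inf' univ_nonempty ζ) := by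
            ring

set_option maxHeartbeats 1000000 in
theorem laplacian_exp_uniformly_detectable
    {n m : Type*} [Fintype n] [Nonempty n] [DecidableEq n] [Fintype m] [Nonempty m]
    (w : n → n → ℝ) (hw : ∀ i j, 0 ≤ w i j) (hdiag : ∀ i, w i i = 0)
    (hconn : ∀ i j, Relation.ReflTransGen (fun a b => 0 < w a b) i j)
    (L : Matrix n n ℝ)
    (hL : ∀ i j, L i j = if i = j then ∑ k, w i k else -(w i j))
    (Δt : ℝ) (hΔt : 0 < Δt)
    (A : Matrix n n ℝ) (hA : A = NormedSpace.exp (-(Δt • L)))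
    (C : Matrix m n ℝ) (hC : ∃ i, ∑ j, C i j ≠ 0) :
    ∃ p q : ℕ, ∃ a b : ℝ, 0 ≤ a ∧ a < 1 ∧ 0 < b ∧
      ∀ ζ : n → ℝ, a * ‖ζ‖ ≤ ‖(A ^ p) *ᵥ ζ‖ →
        b * (ζ ⬝ᵥ ζ) ≤ ∑ i ∈ Finset.range (q + 1),
          (C *ᵥ ((A ^ i) *ᵥ ζ)) ⬝ᵥ (C *ᵥ ((A ^ i) *ᵥ ζ)) := by
  obtain ⟨hpos, hrowA⟩ := exp_lap_facts w hw hdiag hconn L hL Δt hΔt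
  rw [← hA] at hpos hrowA
  -- minimum entry
  set ε : ℝ := univ.inf' univ_nonempty (fun i => univ.inf' univ_nonempty (fun j => A i j))
    with hεdef
  have hεA : ∀ i j, ε ≤ A i j := by
    intro i j
    refine le_trans (inf'_le _ (mem_univ i)) (inf'_le _ (mem_univ j))
  have hε : 0 < ε := by
    rw [hεdef, Finset.lt_inf'_iff]
    intro i _
    rw [Finset.lt_inf'_iff]
    intro j _
    exact hpos i j
  have hε1 : ε ≤ 1 := by
    obtain ⟨i0⟩ := ‹Nonempty n›
    calc ε ≤ A i0 i0 := hεA i0 i0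
      _ ≤ ∑ j, A i0 j := Finset.single_le_sum
          (fun j _ => le_trans hε.le (hεA i0 j)) (mem_univ i0)
      _ = 1 := hrowA i0
  -- output row
  obtain ⟨i0, hρ⟩ := hC
  set ρ : ℝ := ∑ j, C i0 j with hρdef
  set K : ℝ := ∑ j, |C i0 j| with hKdef
  have hρK : |ρ| ≤ K := Finset.abs_sum_le_sum_abs _ _
  have hKpos : 0 < K := lt_of_lt_of_le (abs_pos.mpr hρ) hρK
  have hρpos : 0 < |ρ| := abs_pos.mpr hρ
  -- choose p
  obtain ⟨p, hp⟩ := exists_pow_lt_of_lt_one (show (0:ℝ) < |ρ| / (8 * K) by positivity)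
    (show (1:ℝ) - ε < 1 by linarith)
  have hεp0 : (0:ℝ) ≤ (1 - ε) ^ p := pow_nonneg (by linarith) p
  set N : ℝ := (Fintype.card n : ℝ) with hNdef
  have hN1 : (1:ℝ) ≤ N := by
    rw [hNdef]
    exact_mod_cast Fintype.card_pos
  refine ⟨p, p, 1/2, ρ^2 / (16 * N), by norm_num, by norm_num, by positivity, ?_⟩
  intro ζ hζ
  set u : n → ℝ := (A ^ p) *ᵥ ζ with hu
  set M' : ℝ := univ.sup' univ_nonempty ζ with hMdef
  set m' : ℝ := univ.inf' univ_nonempty ζ with hmdef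
  have habs : ∀ i, |ζ i| ≤ ‖ζ‖ := by
    intro i
    simpa [Real.norm_eq_abs] using norm_le_pi_norm ζ i
  have hoscnn : 0 ≤ M' - m' := by
    have hj1 := le_sup' ζ (mem_univ (Classical.arbitrary n))
    have hj2 := inf'_le ζ (mem_univ (Classical.arbitrary n))
    rw [hMdef, hmdef]
    linarith
  have hosc2 : M' - m' ≤ 2 * ‖ζ‖ := by
    obtain ⟨jM, -, hjM⟩ := exists_mem_eq_sup' (univ_nonempty (α := n)) ζ
    obtain ⟨jm, -, hjm⟩ := exists_mem_eq_inf' (univ_nonempty (α := n)) ζ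
    have h1 := abs_le.mp (habs jM)
    have h2 := abs_le.mp (habs jm)
    rw [hMdef, hmdef, hjM, hjm]
    linarith [h1.2, h2.1]
  obtain ⟨hrange, hosc⟩ := osc_pow A ε hε.le hε1 hεA hrowA ζ p
  -- max entry of u
  obtain ⟨i₁, -, hi₁⟩ := Finset.exists_max_image univ (fun i => |u i|) ⟨_, mem_univ (Classical.arbitrary n)⟩
  have hnu : ‖u‖ ≤ |u i₁| := by
    refine (pi_norm_le_iff_of_nonneg (abs_nonneg _)).mpr fun i => ?_
    simpa [Real.norm_eq_abs] using hi₁ i (mem_univ i)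
  have h1 : ‖ζ‖ / 2 ≤ |u i₁| := by
    have := le_trans hζ hnu
    linarith
  -- oscillation of u
  have hdiff : ∀ j, |u j - u i₁| ≤ (1 - ε) ^ p * (M' - m') := by
    intro j
    have hj1 := le_sup' u (mem_univ j)
    have hj2 := inf'_le u (mem_univ j)
    have hk1 := le_sup' u (mem_univ i₁)
    have hk2 := inf'_le u (mem_univ i₁)
    rw [abs_le]
    constructor <;> nlinarith [hosc]
  -- output bound
  have hCu : |ρ| * ‖ζ‖ / 4 ≤ |(C *ᵥ u) i0| := by
    have hsplit : (C *ᵥ u) i0 = ρ * u i₁ + ∑ j, C i0 j * (u j - u i₁) := by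
      simp only [Matrix.mulVec, dotProduct]
      rw [hρdef, Finset.sum_mul, ← Finset.sum_add_distrib]
      apply Finset.sum_congr rfl
      intro j _
      ring
    have hrest : |∑ j, C i0 j * (u j - u i₁)| ≤ K * ((1 - ε) ^ p * (M' - m')) := by
      calc |∑ j, C i0 j * (u j - u i₁)| ≤ ∑ j, |C i0 j * (u j - u i₁)| :=
            Finset.abs_sum_le_sum_abs _ _
        _ ≤ ∑ j, |C i0 j| * ((1 - ε) ^ p * (M' - m')) := by
            apply Finset.sum_le_sum
            intro j _
            rw [abs_mul]
            exact mul_le_mul_of_nonneg_left (hdiff j) (abs_nonneg _)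
        _ = K * ((1 - ε) ^ p * (M' - m')) := by rw [hKdef, Finset.sum_mul]
    have hKe : K * ((1 - ε) ^ p * (M' - m')) ≤ |ρ| * ‖ζ‖ / 4 := by
      have he1 : (1 - ε) ^ p * (M' - m') ≤ (|ρ| / (8 * K)) * (2 * ‖ζ‖) := by
        apply mul_le_mul hp.le hosc2 hoscnn (by positivity)
      calc K * ((1 - ε) ^ p * (M' - m')) ≤ K * ((|ρ| / (8 * K)) * (2 * ‖ζ‖)) :=
            mul_le_mul_of_nonneg_left he1 hKpos.le
        _ = |ρ| * ‖ζ‖ / 4 := by field_simp; ring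
    have hmain : |ρ| * |u i₁| - |∑ j, C i0 j * (u j - u i₁)| ≤ |(C *ᵥ u) i0| := by
      rw [hsplit]
      calc |ρ| * |u i₁| - |∑ j, C i0 j * (u j - u i₁)|
          = |ρ * u i₁| - |∑ j, C i0 j * (u j - u i₁)| := by rw [abs_mul]
        _ ≤ |ρ * u i₁ + ∑ j, C i0 j * (u j - u i₁)| := by
            have := abs_add_le (ρ * u i₁ + ∑ j, C i0 j * (u j - u i₁))
              (-(∑ j, C i0 j * (u j - u i₁)))
            simp only [add_neg_cancel_right, abs_neg] at this
            linarith
    have : |ρ| * (‖ζ‖ / 2) ≤ |ρ| * |u i₁| := mul_le_mul_of_nonneg_left h1 (abs_nonneg _)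
    linarith
  -- conclude
  have hterm : (|ρ| * ‖ζ‖ / 4)^2 ≤ (C *ᵥ u) ⬝ᵥ (C *ᵥ u) := by
    have h2 : ((C *ᵥ u) i0)^2 ≤ ∑ k, (C *ᵥ u) k * (C *ᵥ u) k := by
      rw [sq]
      exact Finset.single_le_sum (f := fun k => (C *ᵥ u) k * (C *ᵥ u) k)
        (fun k _ => mul_self_nonneg _) (mem_univ i0)
    have h3 : (|ρ| * ‖ζ‖ / 4)^2 ≤ ((C *ᵥ u) i0)^2 := by
      rw [← sq_abs ((C *ᵥ u) i0)]
      exact pow_le_pow_left₀ (by positivity) hCu 2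
    calc (|ρ| * ‖ζ‖ / 4)^2 ≤ ((C *ᵥ u) i0)^2 := h3
      _ ≤ ∑ k, (C *ᵥ u) k * (C *ᵥ u) k := h2
      _ = (C *ᵥ u) ⬝ᵥ (C *ᵥ u) := rfl
  have hsum : (C *ᵥ u) ⬝ᵥ (C *ᵥ u) ≤ ∑ i ∈ Finset.range (p + 1),
      (C *ᵥ ((A ^ i) *ᵥ ζ)) ⬝ᵥ (C *ᵥ ((A ^ i) *ᵥ ζ)) := by
    refine Finset.single_le_sum (f := fun i => (C *ᵥ ((A ^ i) *ᵥ ζ)) ⬝ᵥ (C *ᵥ ((A ^ i) *ᵥ ζ)))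
      (fun i _ => Finset.sum_nonneg fun k _ => mul_self_nonneg _) (Finset.self_mem_range_succ p)
  have hLHS : ζ ⬝ᵥ ζ ≤ N * ‖ζ‖^2 := by
    calc ζ ⬝ᵥ ζ = ∑ i, ζ i * ζ i := rfl
      _ ≤ ∑ _i : n, ‖ζ‖^2 := by
          apply Finset.sum_le_sum
          intro i _
          nlinarith [habs i, abs_nonneg (ζ i), sq_abs (ζ i)]
      _ = N * ‖ζ‖^2 := by rw [Finset.sum_const, hNdef]; simp [nsmul_eq_mul]
  have hb : ρ^2 / (16 * N) * (ζ ⬝ᵥ ζ) ≤ (|ρ| * ‖ζ‖ / 4)^2 := by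
    have h4 : (|ρ| * ‖ζ‖ / 4)^2 = ρ^2 * ‖ζ‖^2 / 16 := by
      rw [div_pow, mul_pow, sq_abs]; norm_num
    rw [h4]
    have hNpos : (0:ℝ) < N := by linarith
    have h5 : ρ^2 / (16 * N) * (ζ ⬝ᵥ ζ) ≤ ρ^2 / (16 * N) * (N * ‖ζ‖^2) :=
      mul_le_mul_of_nonneg_left hLHS (by positivity)
    calc ρ^2 / (16 * N) * (ζ ⬝ᵥ ζ) ≤ ρ^2 / (16 * N) * (N * ‖ζ‖^2) := h5
      _ = ρ^2 * ‖ζ‖^2 / 16 := by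
          have hNne : N ≠ 0 := hNpos.ne'
          have : ρ^2 / (16 * N) * (N * ‖ζ‖^2) = (N / N) * (ρ^2 * ‖ζ‖^2 / 16) := by ring
          rw [this, div_self hNne, one_mul]
  linarith [hterm, hsum, hb]
end

section
/- Let n and r be nonempty finite types. Let w : n → n → ℝ be a symmetric weight function (w i j = w j i for all i, j) with 0 ≤ w i j, w i i = 0, whose graph is (strongly) connected, and let L be its Laplacian (so L is symmetric). Let Δt : ℝ with 0 < Δt, and set A = Matrix.exp ℝ (-(Δt • L)). Let B : Matrix n r ℝ be an input matrix having at least one nonzero column sum, i.e. there exists j : r with ∑ i, B i j ≠ 0. Then the pair (A, B) is uniformly stabilizable, meaning that the dual pair (Aᵀ, Bᵀ) = (A, Bᵀ) is uniformly detectable: there exist p q : ℕ and a b : ℝ with 0 ≤ a < 1 and 0 < b such that for every ζ : n → ℝ satisfying a * ‖ζ‖ ≤ ‖(A ^ p) *ᵥ ζ‖, one has b * (ζ ⬝ᵥ ζ) ≤ ∑ i in Finset.range (q + 1), (Bᵀ *ᵥ ((A ^ i) *ᵥ ζ)) ⬝ᵥ (Bᵀ *ᵥ ((A ^ i) *ᵥ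 ζ)). -/
open Matrix

section Aux

variable {n : Type*} [Fintype n] [DecidableEq n]

open NormedSpace in
private theorem aux_exp_mulVec_eig (M : Matrix n n ℝ) (v : n → ℝ) (c : ℝ)
    (h : M *ᵥ v = c • v) : exp M *ᵥ v = Real.exp c • v := by
  letI : SeminormedRing (Matrix n n ℝ) := Matrix.linftyOpSemiNormedRing
  letI : NormedRing (Matrix n n ℝ) := Matrix.linftyOpNormedRing
  letI : NormedAlgebra ℝ (Matrix n n ℝ) := Matrix.linftyOpNormedAlgebra
  have hpow : ∀ k : ℕ, M ^ k *ᵥ v = c ^ k • v := by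
    intro k
    induction k with
    | zero => simp
    | succ k ih =>
      rw [pow_succ, ← mulVec_mulVec, h, mulVec_smul, ih, smul_smul, pow_succ]; ring_nf
  have hs := exp_series_hasSum_exp' (𝕂 := ℝ) M
  let f : Matrix n n ℝ →ₗ[ℝ] (n → ℝ) :=
    { toFun := fun P => P *ᵥ v
      map_add' := fun P Q => add_mulVec P Q v
      map_smul' := fun a P => smul_mulVec a P v }
  have hf : Continuous f := f.continuous_of_finiteDimensional
  have hs2 := (hs.map f.toAddMonoidHom hf)
  have hsum : HasSum (fun k : ℕ => ((k.factorial : ℝ)⁻¹ * c ^ k) • v) (exp M *ᵥ v) := by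
    convert hs2 using 2 with k
    simp only [f, LinearMap.toAddMonoidHom_coe, LinearMap.coe_mk, AddHom.coe_mk, Function.comp]
    rw [smul_mulVec, hpow, smul_smul]
    rfl
  have h3 : HasSum (fun k : ℕ => ((k.factorial : ℝ)⁻¹ * c ^ k)) (Real.exp c) := by
    have := Real.exp_eq_exp_ℝ ▸ exp_series_hasSum_exp' (𝕂 := ℝ) c
    simpa [smul_eq_mul] using this
  have h4 := h3.smul_const v
  exact (hsum.unique h4) ▸ rfl

private theorem aux_parseval (b : OrthonormalBasis n ℝ (EuclideanSpace ℝ n)) (y : n → ℝ) :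
    y ⬝ᵥ y = ∑ j, ((b j : n → ℝ) ⬝ᵥ y) ^ 2 := by
  classical
  set Y : EuclideanSpace ℝ n := (WithLp.equiv 2 (n → ℝ)).symm y with hY
  have h1 : y ⬝ᵥ y = @inner ℝ _ _ Y Y := by
    rw [hY, EuclideanSpace.inner_eq_star_dotProduct]; simp [dotProduct, mul_comm]
  have h2 := b.sum_inner_mul_inner Y Y
  rw [h1, ← h2]
  congr 1
  ext j
  have h3 : @inner ℝ _ _ (b j) Y = (b j : n → ℝ) ⬝ᵥ y := by
    simp [PiLp.inner_apply, RCLike.inner_apply, conj_trivial, dotProduct, hY,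
      WithLp.equiv_symm_apply, mul_comm]
  have h4 : @inner ℝ _ _ Y (b j) = (b j : n → ℝ) ⬝ᵥ y := by
    simp [PiLp.inner_apply, RCLike.inner_apply, conj_trivial, dotProduct, hY,
      WithLp.equiv_symm_apply, mul_comm]
  rw [h3, h4, sq]

variable (w : n → n → ℝ) (L : Matrix n n ℝ)

/-- Row computation for the Laplacian. -/
private theorem aux_lap_mulVec (hdiag : ∀ i, w i i = 0)
    (hL : ∀ i j, L i j = if i = j then ∑ k, w i k else -(w i j)) (x : n → ℝ) (i : n) :
    (L *ᵥ x) i = (∑ k, w i k) * x i - ∑ j, w i j * x j := by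
  classical
  have : (L *ᵥ x) i = ∑ j, (if i = j then ∑ k, w i k else -(w i j)) * x j := by
    simp [mulVec, dotProduct, hL]
  rw [this, ← Finset.sum_erase_add _ _ (Finset.mem_univ i)]
  have ha : ∑ j ∈ Finset.univ.erase i, (if i = j then ∑ k, w i k else -(w i j)) * x j
      = -∑ j ∈ Finset.univ.erase i, w i j * x j := by
    rw [← Finset.sum_neg_distrib]
    refine Finset.sum_congr rfl fun j hj => ?_
    rw [if_neg (by exact fun h => (Finset.mem_erase.1 hj).1 h.symm)]
    ring
  rw [ha, if_pos rfl, Finset.sum_erase _ (by simp [hdiag i])]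
  ring

/-- Quadratic form of the Laplacian. -/
private theorem aux_lap_quad (hsym : ∀ i j, w i j = w j i) (hdiag : ∀ i, w i i = 0)
    (hL : ∀ i j, L i j = if i = j then ∑ k, w i k else -(w i j)) (x : n → ℝ) :
    x ⬝ᵥ (L *ᵥ x) = (1 / 2) * ∑ i, ∑ j, w i j * (x i - x j) ^ 2 := by
  classical
  have h1 : x ⬝ᵥ (L *ᵥ x) = ∑ i, ∑ j, (w i j * x i ^ 2 - w i j * (x i * x j)) := by
    unfold dotProduct
    refine Finset.sum_congr rfl fun i _ => ?_
    rw [aux_lap_mulVec w L hdiag hL]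
    simp only [mul_sub, Finset.sum_mul, Finset.mul_sum, ← Finset.sum_sub_distrib]
    refine Finset.sum_congr rfl fun j _ => ?_
    ring
  have hswap : ∑ i, ∑ j, (w i j * x j ^ 2 - w i j * (x i * x j))
      = ∑ i, ∑ j, (w i j * x i ^ 2 - w i j * (x i * x j)) := by
    rw [Finset.sum_comm]
    refine Finset.sum_congr rfl fun i _ => Finset.sum_congr rfl fun j _ => ?_
    rw [hsym j i]
    ring
  have h2 : ∑ i, ∑ j, w i j * (x i - x j) ^ 2
      = ∑ i, ∑ j, (w i j * x i ^ 2 - w i j * (x i * x j))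
        + ∑ i, ∑ j, (w i j * x j ^ 2 - w i j * (x i * x j)) := by
    rw [← Finset.sum_add_distrib]
    refine Finset.sum_congr rfl fun i _ => ?_
    rw [← Finset.sum_add_distrib]
    refine Finset.sum_congr rfl fun j _ => ?_
    ring
  rw [h1, h2, hswap]
  ring

private theorem aux_lap_quad_nonneg (hw : ∀ i j, 0 ≤ w i j) (hsym : ∀ i j, w i j = w j i)
    (hdiag : ∀ i, w i i = 0)
    (hL : ∀ i j, L i j = if i = j then ∑ k, w i k else -(w i j)) (x : n → ℝ) :
    0 ≤ x ⬝ᵥ (L *ᵥ x) := by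
  rw [aux_lap_quad w L hsym hdiag hL]
  have : 0 ≤ ∑ i, ∑ j, w i j * (x i - x j) ^ 2 :=
    Finset.sum_nonneg fun i _ => Finset.sum_nonneg fun j _ =>
      mul_nonneg (hw i j) (sq_nonneg _)
  linarith

private theorem aux_lap_ker (hw : ∀ i j, 0 ≤ w i j) (hsym : ∀ i j, w i j = w j i)
    (hdiag : ∀ i, w i i = 0)
    (hconn : ∀ i j, Relation.ReflTransGen (fun a b => 0 < w a b) i j)
    (hL : ∀ i j, L i j = if i = j then ∑ k, w i k else -(w i j)) (x : n → ℝ)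
    (hx : L *ᵥ x = 0) : ∀ i j, x i = x j := by
  classical
  have h0 : ∑ i, ∑ j, w i j * (x i - x j) ^ 2 = 0 := by
    have := aux_lap_quad w L hsym hdiag hL x
    rw [hx] at this
    simp only [dotProduct_zero] at this
    linarith
  have hterm : ∀ i j, w i j * (x i - x j) ^ 2 = 0 := by
    intro i j
    have h1 := (Finset.sum_eq_zero_iff_of_nonneg (fun i _ =>
      Finset.sum_nonneg fun j _ => mul_nonneg (hw i j) (sq_nonneg _))).1 h0 i (Finset.mem_univ i)
    exact (Finset.sum_eq_zero_iff_of_nonneg (fun j _ =>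
      mul_nonneg (hw i j) (sq_nonneg _))).1 h1 j (Finset.mem_univ j)
  have hedge : ∀ i j, 0 < w i j → x i = x j := by
    intro i j hij
    have := hterm i j
    have h2 : (x i - x j) ^ 2 = 0 := by
      rcases mul_eq_zero.1 this with h | h
      · exact absurd h (ne_of_gt hij)
      · exact h
    have := pow_eq_zero_iff (n := 2) (by norm_num) |>.1 h2
    linarith
  intro i j
  induction hconn i j with
  | refl => rfl
  | tail _ hbc ih => exact ih.trans (hedge _ _ hbc)

private theorem aux_sq_lower (c s d : ℝ) (h : d ^ 2 ≤ s ^ 2 / 4 * c ^ 2) :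
    s ^ 2 / 4 * c ^ 2 ≤ (c * s + d) ^ 2 := by
  nlinarith [sq_nonneg (c * s + 2 * d)]

end Aux

set_option maxHeartbeats 1000000 in
/-- For the Laplacian `L` of a connected symmetric weighted graph,
`A = exp(-(Δt • L))` together with any input matrix `B` with a nonzero column sum
forms a uniformly stabilizable pair, i.e. `(Aᵀ, Bᵀ) = (A, Bᵀ)` is uniformly detectable. -/
theorem laplacian_exp_uniformly_stabilizable
    {n r : Type*} [Fintype n] [Nonempty n] [DecidableEq n] [Fintype r] [Nonempty r]
    (w : n → n → ℝ) (hw : ∀ i j, 0 ≤ w i j) (hsym : ∀ i j, w i j = w j i)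
    (hdiag : ∀ i, w i i = 0)
    (hconn : ∀ i j, Relation.ReflTransGen (fun a b => 0 < w a b) i j)
    (L : Matrix n n ℝ)
    (hL : ∀ i j, L i j = if i = j then ∑ k, w i k else -(w i j))
    (Δt : ℝ) (hΔt : 0 < Δt)
    (A : Matrix n n ℝ) (hA : A = NormedSpace.exp (-(Δt • L)))
    (B : Matrix n r ℝ) (hB : ∃ j, ∑ i, B i j ≠ 0) :
    ∃ p q : ℕ, ∃ a b : ℝ, 0 ≤ a ∧ a < 1 ∧ 0 < b ∧
      ∀ ζ : n → ℝ, a * ‖ζ‖ ≤ ‖(A ^ p) *ᵥ ζ‖ →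
        b * (ζ ⬝ᵥ ζ) ≤ ∑ i ∈ Finset.range (q + 1),
          (Bᵀ *ᵥ ((A ^ i) *ᵥ ζ)) ⬝ᵥ (Bᵀ *ᵥ ((A ^ i) *ᵥ ζ)) := by
  classical
  set u : n → ℝ := fun _ => 1 with hu
  set N : ℝ := (Fintype.card n : ℝ) with hN
  have hN1 : 1 ≤ N := by
    rw [hN]
    exact_mod_cast Fintype.card_pos (α := n)
  have hN0 : 0 < N := lt_of_lt_of_le one_pos hN1
  -- basic facts on L and A
  have hLsym : Lᵀ = L := by
    ext i j
    simp only [transpose_apply, hL]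
    by_cases h : i = j
    · subst h; simp
    · rw [if_neg (fun hh => h hh.symm), if_neg h, hsym]
  have hLu : L *ᵥ u = 0 := by
    funext i
    rw [aux_lap_mulVec w L hdiag hL]
    simp [hu]
  have hAu : A *ᵥ u = u := by
    rw [hA]
    have h0 : (-(Δt • L)) *ᵥ u = (0 : ℝ) • u := by
      rw [neg_mulVec, smul_mulVec, hLu]
      simp
    rw [aux_exp_mulVec_eig _ _ _ h0]
    simp
  have hAsym : Aᵀ = A := by
    rw [hA, ← Matrix.exp_transpose]
    congr 1
    rw [transpose_neg, transpose_smul, hLsym]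
  have hLH : L.IsHermitian := by
    rw [Matrix.IsHermitian, conjTranspose]
    convert hLsym using 1; ext i j; simp
  set e : n → ℝ := hLH.eigenvalues with he
  set b : OrthonormalBasis n ℝ (EuclideanSpace ℝ n) := hLH.eigenvectorBasis with hb
  have hbL : ∀ j, L *ᵥ (b j : n → ℝ) = e j • (b j : n → ℝ) := fun j =>
    hLH.mulVec_eigenvectorBasis j
  have hb1 : ∀ j, ((b j : n → ℝ) ⬝ᵥ (b j : n → ℝ)) = 1 := by
    intro j
    have h2 := b.orthonormal.1 j
    have h3 : @inner ℝ _ _ (b j) (b j) = (1 : ℝ) := by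
      rw [real_inner_self_eq_norm_sq, h2]; norm_num
    rw [← h3]
    rw [EuclideanSpace.inner_eq_star_dotProduct]; simp [dotProduct]
  have hbe : ∀ j, 0 ≤ e j := by
    intro j
    have h1 : (b j : n → ℝ) ⬝ᵥ (L *ᵥ (b j : n → ℝ)) = e j := by
      rw [hbL j, dotProduct_smul, hb1 j, smul_eq_mul, mul_one]
    rw [← h1]
    exact aux_lap_quad_nonneg w L hw hsym hdiag hL _
  set t : n → ℝ := fun j => Real.exp (-(Δt * e j)) with ht
  have hbA : ∀ j, A *ᵥ (b j : n → ℝ) = t j • (b j : n → ℝ) := by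
    intro j
    rw [hA]
    refine aux_exp_mulVec_eig _ _ _ ?_
    rw [neg_mulVec, smul_mulVec, hbL j, smul_smul, ← neg_smul]
  have ht0 : ∀ j, 0 < t j := fun j => Real.exp_pos _
  have ht1 : ∀ j, t j ≤ 1 := by
    intro j
    rw [ht]
    simp only []
    rw [show (1 : ℝ) = Real.exp 0 by simp]
    exact Real.exp_le_exp.2 (neg_nonpos.mpr (mul_nonneg (le_of_lt hΔt) (hbe j)))
  have ht2 : ∀ j, e j ≠ 0 → t j < 1 := by
    intro j hj
    rw [ht]
    simp only []
    rw [show (1 : ℝ) = Real.exp 0 by simp]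
    have h0 : 0 < e j := lt_of_le_of_ne (hbe j) (Ne.symm hj)
    exact Real.exp_lt_exp.2 (neg_lt_zero.mpr (mul_pos hΔt h0))
  have hconst : ∀ j, e j = 0 → ∀ i i', (b j : n → ℝ) i = (b j : n → ℝ) i' := by
    intro j hj
    refine aux_lap_ker w L hw hsym hdiag hconn hL _ ?_
    rw [hbL j, hj, zero_smul]
  -- spectral gap μ
  set t' : n → ℝ := fun j => if e j = 0 then 1 / 2 else t j with ht'
  have hne : (Finset.univ : Finset n).Nonempty := Finset.univ_nonempty
  set μ : ℝ := Finset.univ.sup' hne t' with hμ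
  have hμ1 : μ < 1 := by
    rw [hμ]
    rw [Finset.sup'_lt_iff]
    intro j _
    rw [ht']
    by_cases hj : e j = 0
    · norm_num [hj]
    · simp only [if_neg hj]
      exact ht2 j hj
  have hμ0 : 0 < μ := by
    obtain ⟨j⟩ := (inferInstance : Nonempty n)
    have h1 : t' j ≤ μ := Finset.le_sup' t' (Finset.mem_univ j)
    have h2 : 0 < t' j := by
      rw [ht']
      by_cases hj : e j = 0
      · simp [hj]
      · simp only [if_neg hj]; exact ht0 j
    linarith
  -- contraction on mean-zero vectors
  have hdotcoef : ∀ (z : n → ℝ) (j : n), (b j : n → ℝ) ⬝ᵥ (A *ᵥ z) = t j * ((b j : n → ℝ) ⬝ᵥ z) := by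
    intro z j
    rw [dotProduct_mulVec, ← hAsym, vecMul_transpose, hbA j, smul_dotProduct, smul_eq_mul]
  have hcontr : ∀ z : n → ℝ, (∑ i, z i) = 0 →
      (A *ᵥ z) ⬝ᵥ (A *ᵥ z) ≤ μ ^ 2 * (z ⬝ᵥ z) := by
    intro z hz
    rw [aux_parseval b (A *ᵥ z), aux_parseval b z, Finset.mul_sum]
    refine Finset.sum_le_sum fun j _ => ?_
    rw [hdotcoef z j]
    by_cases hj : e j = 0
    · have hzero : (b j : n → ℝ) ⬝ᵥ z = 0 := by
        obtain ⟨i₀⟩ := (inferInstance : Nonempty n)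
        have : ∀ i, (b j : n → ℝ) i * z i = (b j : n → ℝ) i₀ * z i := fun i => by
          rw [hconst j hj i i₀]
        calc (b j : n → ℝ) ⬝ᵥ z = ∑ i, (b j : n → ℝ) i₀ * z i :=
              Finset.sum_congr rfl fun i _ => this i
          _ = (b j : n → ℝ) i₀ * ∑ i, z i := by rw [Finset.mul_sum]
          _ = 0 := by rw [hz, mul_zero]
      rw [hzero]
      simp
    · have h1 : t j ≤ μ := by
        have : t' j = t j := if_neg hj
        rw [← this]
        exact Finset.le_sup' t' (Finset.mem_univ j)
      have h2 := ht0 j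
      have h3 : t j ^ 2 ≤ μ ^ 2 := pow_le_pow_left₀ (le_of_lt h2) h1 2
      calc (t j * ((b j : n → ℝ) ⬝ᵥ z)) ^ 2 = t j ^ 2 * ((b j : n → ℝ) ⬝ᵥ z) ^ 2 := by ring
        _ ≤ μ ^ 2 * ((b j : n → ℝ) ⬝ᵥ z) ^ 2 :=
            mul_le_mul_of_nonneg_right h3 (sq_nonneg _)
  have hAz0 : ∀ z : n → ℝ, (∑ i, z i) = 0 → (∑ i, (A *ᵥ z) i) = 0 := by
    intro z hz
    have h1 : ∑ i, (A *ᵥ z) i = u ⬝ᵥ (A *ᵥ z) := by simp [dotProduct, hu]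
    rw [h1, dotProduct_mulVec, ← hAsym, vecMul_transpose, hAu]
    simpa [dotProduct, hu] using hz
  have hpowz : ∀ (k : ℕ) (z : n → ℝ), (∑ i, z i) = 0 →
      ((A ^ k *ᵥ z) ⬝ᵥ (A ^ k *ᵥ z) ≤ μ ^ (2 * k) * (z ⬝ᵥ z) ∧ (∑ i, (A ^ k *ᵥ z) i) = 0) := by
    intro k
    induction k with
    | zero => intro z hz; constructor
              · simp
              · simpa using hz
    | succ k ih =>
      intro z hz
      obtain ⟨ihA, ihS⟩ := ih z hz
      have h1 : A ^ (k + 1) *ᵥ z = A *ᵥ (A ^ k *ᵥ z) := by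
        rw [pow_succ', mulVec_mulVec]
      constructor
      · rw [h1]
        calc (A *ᵥ (A ^ k *ᵥ z)) ⬝ᵥ (A *ᵥ (A ^ k *ᵥ z))
            ≤ μ ^ 2 * ((A ^ k *ᵥ z) ⬝ᵥ (A ^ k *ᵥ z)) := hcontr _ ihS
          _ ≤ μ ^ 2 * (μ ^ (2 * k) * (z ⬝ᵥ z)) := by
              exact mul_le_mul_of_nonneg_left ihA (sq_nonneg μ)
          _ = μ ^ (2 * (k + 1)) * (z ⬝ᵥ z) := by ring
      · rw [h1]; exact hAz0 _ ihS
  have hAku : ∀ k : ℕ, A ^ k *ᵥ u = u := by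
    intro k
    induction k with
    | zero => simp
    | succ k ih => rw [pow_succ', ← mulVec_mulVec, ih, hAu]
  -- choose p
  have hμ2 : μ ^ 2 < 1 := pow_lt_one₀ (le_of_lt hμ0) hμ1 two_ne_zero
  obtain ⟨p, hp⟩ := exists_pow_lt_of_lt_one (show (0 : ℝ) < 1 / (8 * N) by positivity) hμ2
  have hp' : μ ^ (2 * p) ≤ 1 / (8 * N) := by
    rw [pow_mul]
    exact le_of_lt hp
  -- choose q
  obtain ⟨j₀, hs⟩ := hB
  set s : ℝ := ∑ i, B i j₀ with hsdef
  set β : n → ℝ := fun i => B i j₀ with hβ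
  set W : ℝ := β ⬝ᵥ β with hW
  have hW0 : 0 ≤ W := Finset.sum_nonneg fun i _ => mul_self_nonneg _
  set K : ℝ := 8 * N ^ 2 with hK
  have hK0 : 0 < K := by positivity
  have hs2pos : 0 < s ^ 2 := lt_of_le_of_ne (sq_nonneg s) (Ne.symm (pow_ne_zero 2 hs))
  obtain ⟨q, hq⟩ := exists_pow_lt_of_lt_one
    (show (0 : ℝ) < s ^ 2 / (4 * (W * K + 1)) by positivity) hμ2
  have hq' : μ ^ (2 * q) * (W * K) ≤ s ^ 2 / 4 := by
    rw [pow_mul]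
    have h1 : (μ ^ 2) ^ q * (W * K) ≤ s ^ 2 / (4 * (W * K + 1)) * (W * K) := by
      apply mul_le_mul_of_nonneg_right (le_of_lt hq) (by positivity)
    have hWK : 0 ≤ W * K := mul_nonneg hW0 (le_of_lt hK0)
    have hWKne : W * K + 1 ≠ 0 := by positivity
    have h2 : s ^ 2 / (4 * (W * K + 1)) * (W * K) ≤ s ^ 2 / 4 := by
      calc s ^ 2 / (4 * (W * K + 1)) * (W * K)
          ≤ s ^ 2 / (4 * (W * K + 1)) * (W * K + 1) :=
            mul_le_mul_of_nonneg_left (by linarith) (by positivity)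
        _ = s ^ 2 / 4 := by field_simp
    linarith
  refine ⟨p, q, 1 / 2, s ^ 2 / (4 * (N + K)), by norm_num, by norm_num, by positivity, ?_⟩
  intro ζ hζ
  set c : ℝ := (∑ i, ζ i) / N with hc
  set z : n → ℝ := fun i => ζ i - c with hz
  have hzsum : ∑ i, z i = 0 := by
    rw [hz]
    simp only [Finset.sum_sub_distrib, Finset.sum_const, Finset.card_univ, nsmul_eq_mul]
    rw [hc]
    field_simp
    simp [hN]
  have hζdec : ζ = c • u + z := by
    funext i
    simp [hu, hz]
  have hudotz : u ⬝ᵥ z = 0 := by simpa [dotProduct, hu] using hzsum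
  have huu : u ⬝ᵥ u = N := by simp [dotProduct, hu, hN, Finset.card_univ]
  have hzu : z ⬝ᵥ u = 0 := by rw [dotProduct_comm]; exact hudotz
  have hzz : ζ ⬝ᵥ ζ = c ^ 2 * N + z ⬝ᵥ z := by
    rw [hζdec]
    simp only [add_dotProduct, dotProduct_add, smul_dotProduct, dotProduct_smul,
      smul_eq_mul, huu, hudotz, hzu, mul_zero, add_zero, zero_add]
    ring
  -- decomposition of A^k ζ
  have hAkζ : ∀ k : ℕ, A ^ k *ᵥ ζ = c • u + A ^ k *ᵥ z := by
    intro k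
    rw [hζdec, mulVec_add, mulVec_smul, hAku k]
  -- the key bound z⬝z ≤ K c²
  have hApz := hpowz p z hzsum
  have hApζ : (A ^ p *ᵥ ζ) ⬝ᵥ (A ^ p *ᵥ ζ) ≤ c ^ 2 * N + μ ^ (2 * p) * (z ⬝ᵥ z) := by
    rw [hAkζ p]
    have husum : u ⬝ᵥ (A ^ p *ᵥ z) = 0 := by
      simpa [dotProduct, hu] using hApz.2
    have h5 : (A ^ p *ᵥ z) ⬝ᵥ u = 0 := by rw [dotProduct_comm]; exact husum
    simp only [add_dotProduct, dotProduct_add, smul_dotProduct, dotProduct_smul,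
      smul_eq_mul, huu, husum, h5, mul_zero, add_zero, zero_add]
    calc c * (c * N) + (A ^ p *ᵥ z) ⬝ᵥ (A ^ p *ᵥ z)
        ≤ c * (c * N) + μ ^ (2 * p) * (z ⬝ᵥ z) := by linarith [hApz.1]
      _ = c ^ 2 * N + μ ^ (2 * p) * (z ⬝ᵥ z) := by ring
  -- norm comparisons
  have hnorm1 : ζ ⬝ᵥ ζ ≤ N * ‖ζ‖ ^ 2 := by
    have h1 : ∀ i, ζ i * ζ i ≤ ‖ζ‖ ^ 2 := by
      intro i
      have h2 : |ζ i| ≤ ‖ζ‖ := by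
        have := norm_le_pi_norm ζ i
        simpa [Real.norm_eq_abs] using this
      calc ζ i * ζ i = |ζ i| * |ζ i| := (abs_mul_abs_self _).symm
        _ ≤ ‖ζ‖ * ‖ζ‖ := mul_le_mul h2 h2 (abs_nonneg _) (norm_nonneg _)
        _ = ‖ζ‖ ^ 2 := (sq ‖ζ‖).symm
    calc ζ ⬝ᵥ ζ = ∑ i, ζ i * ζ i := by simp [dotProduct]
      _ ≤ ∑ _i : n, ‖ζ‖ ^ 2 := Finset.sum_le_sum fun i _ => h1 i
      _ = N * ‖ζ‖ ^ 2 := by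
          rw [Finset.sum_const, Finset.card_univ, nsmul_eq_mul, hN]
  have hnorm2 : ∀ y : n → ℝ, ‖y‖ ^ 2 ≤ y ⬝ᵥ y := by
    intro y
    have hy0 : (0 : ℝ) ≤ y ⬝ᵥ y := Finset.sum_nonneg fun i _ => mul_self_nonneg _
    have h1 : ‖y‖ ≤ Real.sqrt (y ⬝ᵥ y) := by
      rw [pi_norm_le_iff_of_nonneg (Real.sqrt_nonneg _)]
      intro i
      rw [Real.norm_eq_abs, ← Real.sqrt_sq_eq_abs]
      apply Real.sqrt_le_sqrt
      have : y i ^ 2 ≤ ∑ k, y k * y k := by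
        have h := Finset.single_le_sum (f := fun k => y k * y k)
          (fun k _ => mul_self_nonneg _) (Finset.mem_univ i)
        calc y i ^ 2 = y i * y i := sq (y i)
          _ ≤ ∑ k, y k * y k := h
      simpa [dotProduct] using this
    calc ‖y‖ ^ 2 ≤ Real.sqrt (y ⬝ᵥ y) ^ 2 := by
          apply pow_le_pow_left₀ (norm_nonneg y) h1
      _ = y ⬝ᵥ y := Real.sq_sqrt hy0
  -- derive z⬝z ≤ K c²
  have hzzK : z ⬝ᵥ z ≤ K * c ^ 2 := by
    have h1 : (1 / 2 * ‖ζ‖) ^ 2 ≤ ‖A ^ p *ᵥ ζ‖ ^ 2 := by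
      apply pow_le_pow_left₀ (by positivity) hζ
    have h2 : ‖A ^ p *ᵥ ζ‖ ^ 2 ≤ c ^ 2 * N + μ ^ (2 * p) * (z ⬝ᵥ z) :=
      le_trans (hnorm2 _) hApζ
    have h3 : ζ ⬝ᵥ ζ ≤ N * ‖ζ‖ ^ 2 := hnorm1
    have h4 : μ ^ (2 * p) * (z ⬝ᵥ z) ≤ 1 / (8 * N) * (z ⬝ᵥ z) := by
      apply mul_le_mul_of_nonneg_right hp'
      exact Finset.sum_nonneg fun i _ => mul_self_nonneg _
    have h5 : (c ^ 2 * N + z ⬝ᵥ z) ≤ N * ‖ζ‖ ^ 2 := by rw [← hzz]; exact h3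
    have hzznn : (0 : ℝ) ≤ z ⬝ᵥ z := Finset.sum_nonneg fun i _ => mul_self_nonneg _
    -- (1/4)‖ζ‖² ≤ c²N + (z⬝z)/(8N) and ζ⬝ζ = c²N + z⬝z ≤ N‖ζ‖²
    have h6 : 1 / 4 * ‖ζ‖ ^ 2 ≤ c ^ 2 * N + 1 / (8 * N) * (z ⬝ᵥ z) := by
      calc 1 / 4 * ‖ζ‖ ^ 2 = (1 / 2 * ‖ζ‖) ^ 2 := by ring
        _ ≤ ‖A ^ p *ᵥ ζ‖ ^ 2 := h1
        _ ≤ c ^ 2 * N + μ ^ (2 * p) * (z ⬝ᵥ z) := h2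
        _ ≤ c ^ 2 * N + 1 / (8 * N) * (z ⬝ᵥ z) := by linarith
    have hX0 : 0 ≤ c ^ 2 * N := mul_nonneg (sq_nonneg c) (le_of_lt hN0)
    have h7 : (1 : ℝ) / 4 * (c ^ 2 * N + z ⬝ᵥ z)
        ≤ N * (c ^ 2 * N + 1 / (8 * N) * (z ⬝ᵥ z)) := by
      calc (1 : ℝ) / 4 * (c ^ 2 * N + z ⬝ᵥ z) ≤ 1 / 4 * (N * ‖ζ‖ ^ 2) := by linarith
        _ = N * (1 / 4 * ‖ζ‖ ^ 2) := by ring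
        _ ≤ N * (c ^ 2 * N + 1 / (8 * N) * (z ⬝ᵥ z)) :=
            mul_le_mul_of_nonneg_left h6 (le_of_lt hN0)
    have h8 : N * (c ^ 2 * N + 1 / (8 * N) * (z ⬝ᵥ z)) = N ^ 2 * c ^ 2 + (z ⬝ᵥ z) / 8 := by
      field_simp
    have h9 : c ^ 2 * N ≤ N ^ 2 * c ^ 2 := by
      have h := mul_le_mul_of_nonneg_right hN1 (mul_nonneg (le_of_lt hN0) (sq_nonneg c))
      calc c ^ 2 * N = 1 * (N * c ^ 2) := by ring
        _ ≤ N * (N * c ^ 2) := h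
        _ = N ^ 2 * c ^ 2 := by ring
    rw [hK]
    have h10 : 8 * N ^ 2 * c ^ 2 = 8 * (N ^ 2 * c ^ 2) := by ring
    rw [h10]
    linarith
  -- final estimate
  set d : ℝ := β ⬝ᵥ (A ^ q *ᵥ z) with hd
  have hAqz := hpowz q z hzsum
  have hd2 : d ^ 2 ≤ s ^ 2 / 4 * c ^ 2 := by
    have hCS : d ^ 2 ≤ W * ((A ^ q *ᵥ z) ⬝ᵥ (A ^ q *ᵥ z)) := by
      have := Finset.sum_mul_sq_le_sq_mul_sq Finset.univ β (A ^ q *ᵥ z)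
      calc d ^ 2 = (∑ i, β i * (A ^ q *ᵥ z) i) ^ 2 := by rw [hd]; rfl
        _ ≤ (∑ i, β i ^ 2) * ∑ i, (A ^ q *ᵥ z) i ^ 2 := this
        _ = W * ((A ^ q *ᵥ z) ⬝ᵥ (A ^ q *ᵥ z)) := by
            rw [hW]
            congr 1 <;> · simp [dotProduct, sq]
    have h7 : W * ((A ^ q *ᵥ z) ⬝ᵥ (A ^ q *ᵥ z)) ≤ W * (μ ^ (2 * q) * (z ⬝ᵥ z)) :=
      mul_le_mul_of_nonneg_left hAqz.1 hW0
    have h8 : W * (μ ^ (2 * q) * (z ⬝ᵥ z)) ≤ W * (μ ^ (2 * q) * (K * c ^ 2)) := by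
      apply mul_le_mul_of_nonneg_left _ hW0
      apply mul_le_mul_of_nonneg_left hzzK (pow_nonneg (le_of_lt hμ0) _)
    have h9 : W * (μ ^ (2 * q) * (K * c ^ 2)) ≤ s ^ 2 / 4 * c ^ 2 := by
      have h := mul_le_mul_of_nonneg_right hq' (sq_nonneg c)
      calc W * (μ ^ (2 * q) * (K * c ^ 2)) = μ ^ (2 * q) * (W * K) * c ^ 2 := by ring
        _ ≤ s ^ 2 / 4 * c ^ 2 := h
    linarith
  have hβAq : (Bᵀ *ᵥ (A ^ q *ᵥ ζ)) j₀ = c * s + d := by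
    rw [hAkζ q, mulVec_add]
    have h1 : (Bᵀ *ᵥ (c • u)) j₀ = c * s := by
      simp only [mulVec, dotProduct, transpose_apply, hu, Pi.smul_apply, smul_eq_mul, mul_one]
      rw [hsdef, Finset.mul_sum]
      exact Finset.sum_congr rfl fun i _ => mul_comm _ _
    have h2 : (Bᵀ *ᵥ (A ^ q *ᵥ z)) j₀ = d := by
      rw [hd, hβ]
      simp [mulVec, dotProduct, transpose_apply]
    simp only [Pi.add_apply]
    rw [h1, h2]
  have hsquare : s ^ 2 / 4 * c ^ 2 ≤ (c * s + d) ^ 2 := aux_sq_lower c s d hd2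
  have htermq : (c * s + d) ^ 2 ≤ (Bᵀ *ᵥ (A ^ q *ᵥ ζ)) ⬝ᵥ (Bᵀ *ᵥ (A ^ q *ᵥ ζ)) := by
    rw [← hβAq]
    have := Finset.single_le_sum
      (f := fun j => (Bᵀ *ᵥ (A ^ q *ᵥ ζ)) j * (Bᵀ *ᵥ (A ^ q *ᵥ ζ)) j)
      (fun j _ => mul_self_nonneg _) (Finset.mem_univ j₀)
    calc ((Bᵀ *ᵥ (A ^ q *ᵥ ζ)) j₀) ^ 2
        = (Bᵀ *ᵥ (A ^ q *ᵥ ζ)) j₀ * (Bᵀ *ᵥ (A ^ q *ᵥ ζ)) j₀ := sq _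
      _ ≤ ∑ j, (Bᵀ *ᵥ (A ^ q *ᵥ ζ)) j * (Bᵀ *ᵥ (A ^ q *ᵥ ζ)) j := this
      _ = (Bᵀ *ᵥ (A ^ q *ᵥ ζ)) ⬝ᵥ (Bᵀ *ᵥ (A ^ q *ᵥ ζ)) := rfl
  have hsum_ge : (Bᵀ *ᵥ (A ^ q *ᵥ ζ)) ⬝ᵥ (Bᵀ *ᵥ (A ^ q *ᵥ ζ))
      ≤ ∑ i ∈ Finset.range (q + 1), (Bᵀ *ᵥ ((A ^ i) *ᵥ ζ)) ⬝ᵥ (Bᵀ *ᵥ ((A ^ i) *ᵥ ζ)) := by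
    refine Finset.single_le_sum (f := fun i => (Bᵀ *ᵥ ((A ^ i) *ᵥ ζ)) ⬝ᵥ (Bᵀ *ᵥ ((A ^ i) *ᵥ ζ)))
      (fun i _ => Finset.sum_nonneg fun k _ => mul_self_nonneg _) ?_
    simp
  have hfinal : s ^ 2 / (4 * (N + K)) * (ζ ⬝ᵥ ζ) ≤ s ^ 2 / 4 * c ^ 2 := by
    rw [hzz]
    have h1 : c ^ 2 * N + z ⬝ᵥ z ≤ (N + K) * c ^ 2 := by
      calc c ^ 2 * N + z ⬝ᵥ z ≤ c ^ 2 * N + K * c ^ 2 := by linarith [hzzK]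
        _ = (N + K) * c ^ 2 := by ring
    have h2 : s ^ 2 / (4 * (N + K)) * (c ^ 2 * N + z ⬝ᵥ z)
        ≤ s ^ 2 / (4 * (N + K)) * ((N + K) * c ^ 2) :=
      mul_le_mul_of_nonneg_left h1 (by positivity)
    have h3 : s ^ 2 / (4 * (N + K)) * ((N + K) * c ^ 2) = s ^ 2 / 4 * c ^ 2 := by
      field_simp
    linarith
  linarith
end

section
/- Let n be a finite type with Fintype.card n ≥ 2. Let w : n → n → ℝ be a weight function with 0 ≤ w i j for all i, j and w i i = 0, whose graph is strongly connected, let L be its Laplacian, and set P = Matrix.exp ℝ (-L). Then the all-ones vector attains the induced sup-norm of P, i.e. ‖P *ᵥ (fun _ => (1 : ℝ))‖ = 1 = ‖(fun _ => (1 : ℝ))‖, and it is the unique maximizer up to sign: for every v : n → ℝ with ‖v‖ = 1 and ‖P *ᵥ v‖ = 1, either v = (fun _ => (1 : ℝ)) or v = (fun _ => (-1 : ℝ)). -/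
open Matrix

section Aux

open NormedSpace

variable {n : Type*} [Fintype n] [DecidableEq n]

private lemma aux_hasSum_exp (A : Matrix n n ℝ) :
    HasSum (fun k : ℕ => ((k.factorial : ℝ))⁻¹ • A ^ k) (exp A) := by
  letI : SeminormedRing (Matrix n n ℝ) := Matrix.linftyOpSemiNormedRing
  letI : NormedRing (Matrix n n ℝ) := Matrix.linftyOpNormedRing
  letI : NormedAlgebra ℝ (Matrix n n ℝ) := Matrix.linftyOpNormedAlgebra
  exact exp_series_hasSum_exp' (𝕂 := ℝ) A

private lemma aux_hasSum_entry (A : Matrix n n ℝ) (i j : n) :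
    HasSum (fun k : ℕ => ((k.factorial : ℝ))⁻¹ * (A ^ k) i j) (exp A i j) := by
  have := (Pi.hasSum.mp ((Pi.hasSum).mp (aux_hasSum_exp A) i)) j
  simpa [Matrix.smul_apply, smul_eq_mul] using this

/-- mulVec by a fixed vector, as a continuous linear map in the matrix. -/
private noncomputable def mulVecCLM (v : n → ℝ) : Matrix n n ℝ →L[ℝ] (n → ℝ) :=
  LinearMap.toContinuousLinearMap
    { toFun := fun A => A *ᵥ v
      map_add' := fun A B => Matrix.add_mulVec A B v
      map_smul' := fun c A => by simp [Matrix.smul_mulVec] }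

end Aux

/-- The all-ones vector attains the induced sup-norm of `exp(-L)` and is
the unique maximizer up to sign. -/
theorem exp_neg_laplacian_sup_norm_unique_maximizer
    {n : Type*} [Fintype n] [DecidableEq n] (hcard : 2 ≤ Fintype.card n)
    (w : n → n → ℝ) (hw : ∀ i j, 0 ≤ w i j) (hdiag : ∀ i, w i i = 0)
    (hconn : ∀ i j, Relation.ReflTransGen (fun a b => 0 < w a b) i j)
    (L : Matrix n n ℝ)
    (hL : ∀ i j, L i j = if i = j then ∑ k, w i k else -(w i j))
    (P : Matrix n n ℝ) (hP : P = NormedSpace.exp (-L)) :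
    (‖P *ᵥ (fun _ => (1 : ℝ))‖ = 1 ∧ ‖(fun _ => (1 : ℝ) : n → ℝ)‖ = 1) ∧
      ∀ v : n → ℝ, ‖v‖ = 1 → ‖P *ᵥ v‖ = 1 →
        v = (fun _ => (1 : ℝ)) ∨ v = (fun _ => (-1 : ℝ)) := by
  classical
  have hne : Nonempty n := Fintype.card_pos_iff.mp (by omega)
  -- L annihilates the all-ones vector
  have hLone : (-L) *ᵥ (fun _ => (1 : ℝ)) = 0 := by
    funext i
    simp only [Matrix.mulVec, dotProduct, Pi.zero_apply, Matrix.neg_apply, mul_one]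
    have : ∑ j, -L i j = -(L i i) + ∑ j ∈ Finset.univ.erase i, -(L i j) := by
      rw [← Finset.add_sum_erase _ _ (Finset.mem_univ i)]
    rw [this]
    have h1 : ∑ j ∈ Finset.univ.erase i, -(L i j) = ∑ j ∈ Finset.univ.erase i, w i j := by
      refine Finset.sum_congr rfl fun j hj => ?_
      rw [hL i j, if_neg (Ne.symm (Finset.mem_erase.mp hj).1), neg_neg]
    have h2 : ∑ j ∈ Finset.univ.erase i, w i j = ∑ j, w i j := by
      rw [← Finset.add_sum_erase _ _ (Finset.mem_univ i), hdiag, zero_add]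
    rw [h1, h2, hL i i, if_pos rfl]
    ring
  -- powers of -L kill the one vector, for k ≥ 1
  have hpow_one : ∀ k : ℕ, ((-L) ^ (k + 1)) *ᵥ (fun _ => (1 : ℝ)) = 0 := by
    intro k
    rw [pow_succ, ← Matrix.mulVec_mulVec, hLone, Matrix.mulVec_zero]
  -- exp(-L) fixes the one vector
  have hPone : P *ᵥ (fun _ => (1 : ℝ)) = (fun _ => (1 : ℝ)) := by
    rw [hP]
    have h := (aux_hasSum_exp (-L)).mapL (mulVecCLM (fun _ => (1 : ℝ)))
    have heq : (fun k : ℕ => mulVecCLM (n := n) (fun _ => (1 : ℝ))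
        (((k.factorial : ℝ))⁻¹ • (-L) ^ k))
        = fun k : ℕ => if k = 0 then ((fun _ => (1 : ℝ)) : n → ℝ) else 0 := by
      funext k
      cases k with
      | zero => simp [mulVecCLM, Matrix.one_mulVec]
      | succ m =>
        rw [ContinuousLinearMap.map_smul, if_neg (Nat.succ_ne_zero m)]
        have h0 : mulVecCLM (n := n) (fun _ => (1 : ℝ)) ((-L) ^ (m + 1)) = 0 := by
          simpa [mulVecCLM] using hpow_one m
        rw [h0, smul_zero]
    rw [heq] at h
    have h2 : HasSum (fun k : ℕ => if k = 0 then ((fun _ => (1 : ℝ)) : n → ℝ) else 0)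
        ((fun _ => (1 : ℝ)) : n → ℝ) := hasSum_ite_eq 0 _
    have h3 := h.unique h2
    simpa [mulVecCLM] using h3
  -- row sums
  have hrow : ∀ i, ∑ j, P i j = 1 := by
    intro i
    have h := congrFun hPone i
    simpa [Matrix.mulVec, dotProduct] using h
  -- the comparison matrix M
  set c : ℝ := 1 + ∑ i, ∑ k, w i k with hc
  have hslt : ∀ i, ∑ k, w i k < c := by
    intro i
    have h1 : ∑ k, w i k ≤ ∑ i, ∑ k, w i k :=
      Finset.single_le_sum (f := fun i => ∑ k, w i k)
        (fun i _ => Finset.sum_nonneg fun k _ => hw i k) (Finset.mem_univ i)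
    have : (0:ℝ) < 1 := one_pos
    linarith
  set M : Matrix n n ℝ :=
    Matrix.of (fun i j => if i = j then c - ∑ k, w i k else w i j) with hMdef
  have hMnn : ∀ i j, 0 ≤ M i j := by
    intro i j
    by_cases h : i = j
    · subst h
      have h2 : M i i = c - ∑ k, w i k := by simp [hMdef]
      rw [h2]
      have := hslt i; linarith
    · simp only [hMdef, Matrix.of_apply, if_neg h]
      exact hw i j
  have hsplit : -L = M + Matrix.diagonal (fun _ : n => -c) := by
    ext i j
    by_cases h : i = j
    · subst h
      simp [hMdef, hL i i, Matrix.diagonal_apply_eq]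
      ring
    · simp [hMdef, hL i j, h, Matrix.diagonal_apply_ne _ h]
  have hcomm : Commute M (Matrix.diagonal fun _ : n => -c) := by
    show M * _ = _ * M
    ext i j
    simp [Matrix.mul_diagonal, Matrix.diagonal_mul, mul_comm]
  have hPeq : P = NormedSpace.exp M * Matrix.diagonal (fun _ : n => Real.exp (-c)) := by
    rw [hP, hsplit, Matrix.exp_add_of_commute _ _ hcomm, Matrix.exp_diagonal]
    congr 1
    funext i
    rw [Pi.exp_def, Real.exp_eq_exp_ℝ]
  -- nonneg of powers
  have hMpow : ∀ k : ℕ, ∀ i j, 0 ≤ (M ^ k) i j := by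
    intro k
    induction k with
    | zero => intro i j; simp [Matrix.one_apply]; positivity
    | succ m ih =>
      intro i j
      rw [pow_succ, Matrix.mul_apply]
      exact Finset.sum_nonneg fun m' _ => mul_nonneg (ih i m') (hMnn m' j)
  -- connectivity gives positivity of powers
  have hMpos : ∀ i j, ∃ k, 0 < (M ^ k) i j := by
    intro i j
    induction hconn i j with
    | refl => exact ⟨0, by simp [Matrix.one_apply]⟩
    | @tail b c' hab hbc ih =>
      obtain ⟨k, hk⟩ := ih
      refine ⟨k + 1, ?_⟩
      have hbc' : b ≠ c' := by
        rintro rfl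
        rw [hdiag] at hbc
        exact lt_irrefl 0 hbc
      have hMbc : 0 < M b c' := by
        simpa [hMdef, Matrix.of_apply, if_neg hbc'] using hbc
      have hterm : 0 < (M ^ k) i b * M b c' := mul_pos hk hMbc
      have hsum : (M ^ k) i b * M b c' ≤ ∑ m, (M ^ k) i m * M m c' :=
        Finset.single_le_sum (fun m _ => mul_nonneg (hMpow k i m) (hMnn m c'))
          (Finset.mem_univ b)
      rw [pow_succ, Matrix.mul_apply]
      linarith
  have hexpMpos : ∀ i j, 0 < NormedSpace.exp M i j := by
    intro i j
    obtain ⟨k, hk⟩ := hMpos i j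
    have hs := aux_hasSum_entry M i j
    have hfac : (0:ℝ) < ((k.factorial : ℝ))⁻¹ := by
      have : (0:ℝ) < (k.factorial : ℝ) := by
        exact_mod_cast Nat.factorial_pos k
      exact inv_pos.mpr this
    have hterm : 0 < ((k.factorial : ℝ))⁻¹ * (M ^ k) i j := mul_pos hfac hk
    have hle : ((k.factorial : ℝ))⁻¹ * (M ^ k) i j ≤ NormedSpace.exp M i j :=
      le_hasSum hs k fun m _ => mul_nonneg (by positivity) (hMpow m i j)
    linarith
  have hPpos : ∀ i j, 0 < P i j := by
    intro i j
    rw [hPeq, Matrix.mul_diagonal]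
    exact mul_pos (hexpMpos i j) (Real.exp_pos _)
  -- conclusions
  haveI := hne
  refine ⟨⟨by rw [hPone, pi_norm_const]; exact norm_one, by rw [pi_norm_const]; exact norm_one⟩, ?_⟩
  intro v hv hPv
  have hvle : ∀ j, |v j| ≤ 1 := by
    intro j
    have h := norm_le_pi_norm v j
    rw [hv] at h
    simpa [Real.norm_eq_abs] using h
  obtain ⟨i, hi⟩ := Finite.exists_max (fun i => |(P *ᵥ v) i|)
  have hub : ‖P *ᵥ v‖ ≤ |(P *ᵥ v) i| := by
    rw [pi_norm_le_iff_of_nonneg (abs_nonneg _)]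
    intro j
    simpa [Real.norm_eq_abs] using hi j
  have hlb : |(P *ᵥ v) i| ≤ ‖P *ᵥ v‖ := by
    have h := norm_le_pi_norm (P *ᵥ v) i
    simpa [Real.norm_eq_abs] using h
  have habs : |(P *ᵥ v) i| = 1 := le_antisymm (hPv ▸ hlb) (hPv ▸ hub)
  have hPvi : (P *ᵥ v) i = ∑ j, P i j * v j := by
    simp [Matrix.mulVec, dotProduct]
  rcases (abs_eq (by norm_num : (0:ℝ) ≤ 1)).mp habs with h1 | h1
  · left
    have hsum0 : ∑ j, P i j * (1 - v j) = 0 := by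
      have hsplit2 : ∑ j, P i j * (1 - v j) = (∑ j, P i j) - ∑ j, P i j * v j := by
        rw [← Finset.sum_sub_distrib]
        exact Finset.sum_congr rfl fun j _ => by ring
      rw [hsplit2, hrow i, ← hPvi, h1, sub_self]
    have hzero := (Finset.sum_eq_zero_iff_of_nonneg (fun j _ =>
      mul_nonneg (le_of_lt (hPpos i j)) (by have := abs_le.mp (hvle j); linarith))).mp hsum0
    funext j
    have hj := hzero j (Finset.mem_univ j)
    rcases mul_eq_zero.mp hj with h | h
    · exact absurd h (ne_of_gt (hPpos i j))
    · have : v j = 1 := by linarith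
      simpa using this
  · right
    have hsum0 : ∑ j, P i j * (1 + v j) = 0 := by
      have hsplit2 : ∑ j, P i j * (1 + v j) = (∑ j, P i j) + ∑ j, P i j * v j := by
        rw [← Finset.sum_add_distrib]
        exact Finset.sum_congr rfl fun j _ => by ring
      rw [hsplit2, hrow i, ← hPvi, h1]
      ring
    have hzero := (Finset.sum_eq_zero_iff_of_nonneg (fun j _ =>
      mul_nonneg (le_of_lt (hPpos i j)) (by have := abs_le.mp (hvle j); linarith))).mp hsum0
    funext j
    have hj := hzero j (Finset.mem_univ j)
    rcases mul_eq_zero.mp hj with h | h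
    · exact absurd h (ne_of_gt (hPpos i j))
    · have : v j = -1 := by linarith
      simpa using this
end

section
/- Let n be a nonempty finite type. Let w : n → n → ℝ be a weight function with 0 ≤ w i j for all i, j and w i i = 0, whose graph is strongly connected, and let L be its Laplacian. Then every entry of the matrix exponential of -L is strictly positive: for all i, j, 0 < (Matrix.exp ℝ (-L)) i j. -/
open Matrix

/-- Every entry of the matrix exponential of the negated Laplacian of a
strongly connected weighted graph is strictly positive. -/
theorem exp_neg_laplacian_pos
    {n : Type*} [Fintype n] [Nonempty n] [DecidableEq n]
    (w : n → n → ℝ) (hw : ∀ i j, 0 ≤ w i j) (hdiag : ∀ i, w i i = 0)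
    (hconn : ∀ i j, Relation.ReflTransGen (fun a b => 0 < w a b) i j)
    (L : Matrix n n ℝ)
    (hL : ∀ i j, L i j = if i = j then ∑ k, w i k else -(w i j)) :
    ∀ i j, 0 < (NormedSpace.exp (-L)) i j := by
  classical
  set c : ℝ := (∑ p, ∑ q, w p q) + 1 with hc
  set A : Matrix n n ℝ := c • (1 : Matrix n n ℝ) - L with hA
  -- entries of A
  have hrow : ∀ i, ∑ k, w i k ≤ ∑ p, ∑ q, w p q := by
    intro i
    exact Finset.single_le_sum (f := fun p => ∑ q, w p q)
      (fun p _ => Finset.sum_nonneg fun q _ => hw p q) (Finset.mem_univ i)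
  have hAdiag : ∀ i, 0 < A i i := by
    intro i
    have : A i i = c - ∑ k, w i k := by
      simp [hA, hL, Matrix.one_apply]
    rw [this]
    have := hrow i
    simp only [hc]
    linarith
  have hAoff : ∀ i j, i ≠ j → A i j = w i j := by
    intro i j hij
    simp [hA, hL, Matrix.one_apply, hij]
  have hApos : ∀ i j, 0 ≤ A i j := by
    intro i j
    by_cases hij : i = j
    · subst hij; exact (hAdiag i).le
    · rw [hAoff i j hij]; exact hw i j
  -- powers of A are entrywise nonnegative
  have hpow : ∀ (k : ℕ) (i j : n), 0 ≤ (A ^ k) i j := by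
    intro k
    induction k with
    | zero => intro i j; by_cases hij : i = j <;> simp [hij, Matrix.one_apply]
    | succ m ih =>
      intro i j
      rw [pow_succ, Matrix.mul_apply]
      exact Finset.sum_nonneg fun t _ => mul_nonneg (ih i t) (hApos t j)
  -- some power of A has positive (i,j) entry
  have hreach : ∀ i j, ∃ m : ℕ, 0 < (A ^ m) i j := by
    intro i j
    induction hconn i j with
    | refl => exact ⟨0, by simp [Matrix.one_apply]⟩
    | @tail b c' hb hwbc ih =>
      obtain ⟨m, hm⟩ := ih
      refine ⟨m + 1, ?_⟩
      rw [pow_succ, Matrix.mul_apply]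
      have hbc : b ≠ c' := by
        intro h; rw [h, hdiag] at hwbc; exact lt_irrefl 0 hwbc
      have hAbc : 0 < A b c' := by rw [hAoff b c' hbc]; exact hwbc
      refine Finset.sum_pos' (fun t _ => mul_nonneg (hpow m i t) (hApos t c')) ?_
      exact ⟨b, Finset.mem_univ b, mul_pos hm hAbc⟩
  -- norm instances for the exponential
  letI : NormedRing (Matrix n n ℝ) := Matrix.linftyOpNormedRing
  letI : NormedAlgebra ℝ (Matrix n n ℝ) := Matrix.linftyOpNormedAlgebra
  -- entrywise positivity of exp A
  have hsum : Summable (fun k : ℕ => (((k.factorial : ℝ))⁻¹) • A ^ k) :=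
    NormedSpace.expSeries_summable' (𝕂 := ℝ) A
  have hexpA : ∀ i j, 0 < (NormedSpace.exp A) i j := by
    intro i j
    have happly : (NormedSpace.exp A) i j
        = ∑' k : ℕ, ((((k.factorial : ℝ))⁻¹) • A ^ k) i j := by
      rw [NormedSpace.exp_eq_tsum ℝ]
      beta_reduce
      have h1 : (∑' k : ℕ, (((k.factorial : ℝ))⁻¹) • A ^ k) i
          = ∑' k : ℕ, ((((k.factorial : ℝ))⁻¹) • A ^ k) i := tsum_apply hsum
      have hsum2 : Summable (fun k : ℕ => ((((k.factorial : ℝ))⁻¹) • A ^ k) i) :=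
        (Pi.summable).1 hsum i
      rw [h1, tsum_apply hsum2]
    rw [happly]
    have hsum3 : Summable (fun k : ℕ => ((((k.factorial : ℝ))⁻¹) • A ^ k) i j) :=
      (Pi.summable).1 ((Pi.summable).1 hsum i) j
    obtain ⟨m, hm⟩ := hreach i j
    refine Summable.tsum_pos hsum3 (fun k => ?_) m ?_
    · have : ((((k.factorial : ℝ))⁻¹) • A ^ k) i j = (((k.factorial : ℝ))⁻¹) * (A ^ k) i j := rfl
      rw [this]
      exact mul_nonneg (inv_nonneg.2 (Nat.cast_nonneg _)) (hpow k i j)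
    · have : ((((m.factorial : ℝ))⁻¹) • A ^ m) i j = (((m.factorial : ℝ))⁻¹) * (A ^ m) i j := rfl
      rw [this]
      exact mul_pos (inv_pos.2 (by exact_mod_cast Nat.factorial_pos m)) hm
  -- decompose -L
  have hdec : -L = Matrix.diagonal (fun _ : n => (-c : ℝ)) + A := by
    have h1 : Matrix.diagonal (fun _ : n => (-c : ℝ)) = (-c) • (1 : Matrix n n ℝ) := by
      ext i j
      by_cases hij : i = j <;> simp [Matrix.diagonal_apply, Matrix.one_apply, hij]
    rw [h1, hA]
    module
  have hcomm : Commute (Matrix.diagonal (fun _ : n => (-c : ℝ))) A := by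
    have h1 : Matrix.diagonal (fun _ : n => (-c : ℝ)) = (-c) • (1 : Matrix n n ℝ) := by
      ext i j
      by_cases hij : i = j <;> simp [Matrix.diagonal_apply, Matrix.one_apply, hij]
    rw [h1]
    exact (Commute.one_left A).smul_left (-c)
  intro i j
  rw [hdec, Matrix.exp_add_of_commute _ _ hcomm, Matrix.exp_diagonal _,
    Matrix.diagonal_mul]
  have : NormedSpace.exp (fun _ : n => (-c : ℝ)) i = Real.exp (-c) := by
    rw [Pi.coe_exp, Real.exp_eq_exp_ℝ]
  rw [this]
  exact mul_pos (Real.exp_pos _) (hexpA i j)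
end

section
/- Let n be a nonempty finite type and A : Matrix n n ℝ an entrywise nonnegative matrix (0 ≤ A i j for all i, j) that is irreducible in the sense that for all i, j there exists k : ℕ with 0 < (A ^ k) i j. Then every entry of Matrix.exp ℝ A is strictly positive: for all i, j, 0 < (Matrix.exp ℝ A) i j. -/
open Matrix

lemma pow_entry_nonneg {n : Type*} [Fintype n] [DecidableEq n]
    (A : Matrix n n ℝ) (hA : ∀ i j, 0 ≤ A i j) :
    ∀ k i j, 0 ≤ (A ^ k) i j := by
  intro k
  induction k with
  | zero => intro i j; simp [Matrix.one_apply]; positivity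
  | succ k ih =>
    intro i j
    rw [pow_succ, Matrix.mul_apply]
    exact Finset.sum_nonneg fun p _ => mul_nonneg (ih i p) (hA p j)

lemma pow_entry_bound {n : Type*} [Fintype n] [DecidableEq n]
    (A : Matrix n n ℝ) (hA : ∀ i j, 0 ≤ A i j) :
    ∃ c : ℝ, 0 ≤ c ∧ ∀ k i j, (A ^ k) i j ≤ c ^ k := by
  classical
  set M : ℝ := (∑ p, ∑ q, A p q) + 1 with hM
  have hM1 : 1 ≤ M := by
    have : 0 ≤ ∑ p, ∑ q, A p q :=
      Finset.sum_nonneg fun p _ => Finset.sum_nonneg fun q _ => hA p q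
    linarith
  have hMle : ∀ p q, A p q ≤ M := by
    intro p q
    have h1 : A p q ≤ ∑ p, ∑ q, A p q := by
      calc A p q ≤ ∑ q', A p q' :=
            Finset.single_le_sum (fun q' _ => hA p q') (Finset.mem_univ q)
        _ ≤ ∑ p', ∑ q', A p' q' :=
            Finset.single_le_sum (fun p' _ => Finset.sum_nonneg fun q' _ => hA p' q')
              (Finset.mem_univ p)
    linarith
  refine ⟨(Fintype.card n : ℝ) * M, by positivity, ?_⟩
  intro k
  induction k with
  | zero => intro i j; simp [Matrix.one_apply]; split <;> norm_num
  | succ k ih =>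
    intro i j
    rw [pow_succ, Matrix.mul_apply]
    calc ∑ p, (A ^ k) i p * A p j
        ≤ ∑ _p : n, ((Fintype.card n : ℝ) * M) ^ k * M := by
          apply Finset.sum_le_sum
          intro p _
          exact mul_le_mul (ih i p) (hMle p j) (hA p j)
            (by positivity)
      _ = (Fintype.card n : ℝ) * (((Fintype.card n : ℝ) * M) ^ k * M) := by
          simp [Finset.sum_const, mul_comm]
      _ = ((Fintype.card n : ℝ) * M) ^ (k + 1) := by ring

/-- The matrix exponential of a nonnegative irreducible matrix is
entrywise strictly positive. -/
theorem exp_pos_of_nonneg_irreducible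
    {n : Type*} [Fintype n] [Nonempty n] [DecidableEq n]
    (A : Matrix n n ℝ) (hA : ∀ i j, 0 ≤ A i j)
    (hirr : ∀ i j, ∃ k : ℕ, 0 < (A ^ k) i j) :
    ∀ i j, 0 < (NormedSpace.exp A) i j := by
  obtain ⟨c, hc, hbound⟩ := pow_entry_bound A hA
  have hpnn := pow_entry_nonneg A hA
  -- entrywise summability
  have hsum : ∀ i j, Summable fun k : ℕ => ((k.factorial : ℝ))⁻¹ * (A ^ k) i j := by
    intro i j
    apply Summable.of_nonneg_of_le
      (fun k => mul_nonneg (by positivity) (hpnn k i j))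
      (fun k => ?_) (Real.summable_pow_div_factorial c)
    rw [div_eq_inv_mul]
    exact mul_le_mul_of_nonneg_left (hbound k i j) (by positivity)
  have hsumM : Summable fun k : ℕ => ((k.factorial : ℝ))⁻¹ • A ^ k := by
    refine Pi.summable.mpr ?_
    intro i
    rw [Pi.summable]
    intro j
    simpa [smul_eq_mul] using hsum i j
  intro i j
  have hexp : (NormedSpace.exp A) i j
      = ∑' k : ℕ, ((k.factorial : ℝ))⁻¹ * (A ^ k) i j := by
    rw [NormedSpace.exp_eq_tsum (𝕂 := ℝ)]
    show (∑' k : ℕ, ((k.factorial : ℝ))⁻¹ • A ^ k) i j = _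
    rw [show (∑' k : ℕ, ((k.factorial : ℝ))⁻¹ • A ^ k) i = ∑' k : ℕ, (((k.factorial : ℝ))⁻¹ • A ^ k) i from
      tsum_apply hsumM, tsum_apply]
    · simp [smul_eq_mul]
    · exact (Pi.summable.mp hsumM) i
  rw [hexp]
  obtain ⟨k, hk⟩ := hirr i j
  exact Summable.tsum_pos (hsum i j)
    (fun m => mul_nonneg (by positivity) (hpnn m i j)) k
    (mul_pos (by positivity) hk)
end

section
/- Let n be a nonempty finite type with Fintype.card n = N, and let A : Matrix n n ℝ be an entrywise nonnegative matrix (0 ≤ A i j for all i, j) that is irreducible in the sense that for all i, j there exists k : ℕ with 0 < (A ^ k) i j. Then every entry of (1 + A) ^ (N - 1) is strictly positive: for all i, j, 0 < ((1 + A) ^ (N - 1)) i j, where 1 denotes the identity matrix. -/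
open Matrix

/-- Perron–Frobenius: If `A` is a nonnegative irreducible matrix on a
type with `N` elements, then `(1 + A) ^ (N - 1)` is entrywise strictly positive. -/
theorem one_add_pow_pos_of_nonneg_irreducible
    {n : Type*} [Fintype n] [Nonempty n] [DecidableEq n]
    (N : ℕ) (hN : Fintype.card n = N)
    (A : Matrix n n ℝ) (hA : ∀ i j, 0 ≤ A i j)
    (hirr : ∀ i j, ∃ k : ℕ, 0 < (A ^ k) i j) :
    ∀ i j, 0 < ((1 + A) ^ (N - 1)) i j := by
  set B : Matrix n n ℝ := 1 + A with hBdef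
  have hNpos : 0 < N := hN ▸ Fintype.card_pos
  have hAB : ∀ i j, A i j ≤ B i j := by
    intro i j
    simp only [hBdef, Matrix.add_apply, Matrix.one_apply]
    split_ifs <;> linarith
  have hBnn1 : ∀ i j, 0 ≤ B i j := fun i j => (hA i j).trans (hAB i j)
  have hBdiag : ∀ j, 1 ≤ B j j := by
    intro j
    have := hA j j
    simp only [hBdef, Matrix.add_apply, Matrix.one_apply_eq]
    linarith
  have hBnn : ∀ (m : ℕ) (i j : n), 0 ≤ (B ^ m) i j := by
    intro m
    induction m with
    | zero =>
      intro i j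
      rw [pow_zero, Matrix.one_apply]
      split_ifs <;> norm_num
    | succ m ih =>
      intro i j
      rw [pow_succ, Matrix.mul_apply]
      exact Finset.sum_nonneg fun l _ => mul_nonneg (ih i l) (hBnn1 l j)
  -- a single term lower bound for entries of B^(m+1)
  have hsingle : ∀ (m : ℕ) (i l j : n), (B ^ m) i l * B l j ≤ (B ^ (m + 1)) i j := by
    intro m i l j
    rw [pow_succ, Matrix.mul_apply]
    exact Finset.single_le_sum (f := fun x => (B ^ m) i x * B x j)
      (fun x _ => mul_nonneg (hBnn m i x) (hBnn1 x j)) (Finset.mem_univ l)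
  have hmono : ∀ (m : ℕ) (i j : n), 0 < (B ^ m) i j → 0 < (B ^ (m + 1)) i j := by
    intro m i j h
    have h1 : 0 < (B ^ m) i j * B j j :=
      mul_pos h (lt_of_lt_of_le zero_lt_one (hBdiag j))
    exact lt_of_lt_of_le h1 (hsingle m i j j)
  have hmonoall : ∀ (i j : n) (k m : ℕ), k ≤ m → 0 < (B ^ k) i j → 0 < (B ^ m) i j := by
    intro i j k m hkm
    induction m, hkm using Nat.le_induction with
    | base => exact id
    | succ m _ ih => exact fun h => hmono m i j (ih h)
  -- B^k dominates A^k entrywise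
  have hAnn : ∀ (k : ℕ) (i j : n), 0 ≤ (A ^ k) i j := by
    intro k
    induction k with
    | zero =>
      intro i j
      rw [pow_zero, Matrix.one_apply]
      split_ifs <;> norm_num
    | succ k ih =>
      intro i j
      rw [pow_succ, Matrix.mul_apply]
      exact Finset.sum_nonneg fun l _ => mul_nonneg (ih i l) (hA l j)
  have hBA : ∀ (k : ℕ) (i j : n), (A ^ k) i j ≤ (B ^ k) i j := by
    intro k
    induction k with
    | zero => intro i j; simp
    | succ k ih =>
      intro i j
      rw [pow_succ, pow_succ, Matrix.mul_apply, Matrix.mul_apply]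
      exact Finset.sum_le_sum fun l _ =>
        mul_le_mul (ih i l) (hAB l j) (hA l j) (hBnn k i l)
  intro i j
  classical
  -- the support of row i of B^m
  set T : ℕ → Finset n := fun m => Finset.univ.filter (fun x => 0 < (B ^ m) i x) with hT
  have hmemT : ∀ m x, x ∈ T m ↔ 0 < (B ^ m) i x := by
    intro m x
    simp [hT]
  have hTsub : ∀ m, T m ⊆ T (m + 1) := by
    intro m x hx
    rw [hmemT] at *
    exact hmono m i x hx
  -- if the support stops growing, it never grows again
  have hstab : ∀ m, T (m + 1) ⊆ T m → ∀ t, T (m + t) ⊆ T m := by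
    intro m hm t
    induction t with
    | zero => simp
    | succ t ih =>
      intro x hx
      rw [hmemT] at hx
      rw [show m + (t + 1) = (m + t) + 1 from rfl, pow_succ, Matrix.mul_apply] at hx
      -- some term is positive
      have hex : ∃ l, 0 < (B ^ (m + t)) i l * B l x := by
        by_contra hc
        push_neg at hc
        have : (Finset.univ.sum fun l => (B ^ (m + t)) i l * B l x) ≤ 0 :=
          Finset.sum_nonpos fun l _ => hc l
        linarith
      obtain ⟨l, hl⟩ := hex
      have h1 : 0 < (B ^ (m + t)) i l := by
        rcases (hBnn (m + t) i l).lt_or_eq with h | h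
        · exact h
        · rw [← h, zero_mul] at hl; exact absurd hl (lt_irrefl 0)
      have h2 : 0 < B l x := by
        rcases (hBnn1 l x).lt_or_eq with h | h
        · exact h
        · rw [← h, mul_zero] at hl; exact absurd hl (lt_irrefl 0)
      have hlT : l ∈ T m := ih ((hmemT _ l).mpr h1)
      have hlm : 0 < (B ^ m) i l := (hmemT m l).mp hlT
      have : 0 < (B ^ (m + 1)) i x :=
        lt_of_lt_of_le (mul_pos hlm h2) (hsingle m i l x)
      exact hm ((hmemT (m + 1) x).mpr this)
  -- if support is not everything, it grows strictly
  have hgrow : ∀ m, T m ≠ Finset.univ → ¬ T (m + 1) ⊆ T m := by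
    intro m hne hsubset
    obtain ⟨y, hy⟩ : ∃ y, y ∉ T m := by
      by_contra hc
      push_neg at hc
      exact hne (Finset.eq_univ_iff_forall.mpr hc)
    obtain ⟨k, hk⟩ := hirr i y
    have hk' : 0 < (B ^ k) i y := lt_of_lt_of_le hk (hBA k i y)
    have : 0 < (B ^ (m + k)) i y := hmonoall i y k (m + k) (Nat.le_add_left k m) hk'
    exact hy (hstab m hsubset k ((hmemT (m + k) y).mpr this))
  -- counting: card (T m) ≥ min (m+1) N
  have hcard : ∀ m, min (m + 1) N ≤ (T m).card := by
    intro m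
    induction m with
    | zero =>
      have hi : i ∈ T 0 := by
        rw [hmemT]
        simp [Matrix.one_apply_eq]
      calc min (0 + 1) N ≤ 1 := min_le_left _ _
        _ ≤ (T 0).card := Finset.card_pos.mpr ⟨i, hi⟩
    | succ m ih =>
      by_cases huniv : T m = Finset.univ
      · have hsub : Finset.univ ⊆ T (m + 1) := huniv ▸ hTsub m
        have heq : T (m + 1) = Finset.univ := Finset.univ_subset_iff.mp hsub
        rw [heq, Finset.card_univ, hN]
        exact min_le_right _ _
      · have hne : ¬ T (m + 1) ⊆ T m := hgrow m huniv
        have hss : T m ⊂ T (m + 1) := ⟨hTsub m, hne⟩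
        have hlt : (T m).card < (T (m + 1)).card := Finset.card_lt_card hss
        have hle : (T m).card ≤ N := by
          rw [← hN, ← Finset.card_univ]
          exact Finset.card_le_card (Finset.subset_univ _)
        have hm1 : min (m + 1) N = m + 1 := by
          rcases le_or_gt (m + 1) N with h | h
          · exact min_eq_left h
          · exfalso
            have hNle : N ≤ (T m).card := by
              rwa [min_eq_right h.le] at ih
            have hcardTm : (T m).card = N := le_antisymm hle hNle
            exact huniv (Finset.eq_univ_of_card _ (hcardTm.trans hN.symm))
        have hbig : m + 1 + 1 ≤ (T (m + 1)).card := by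
          rw [hm1] at ih
          omega
        exact le_trans (min_le_left _ _) hbig
  -- conclude at m = N - 1
  have hfull : T (N - 1) = Finset.univ := by
    have h1 : min (N - 1 + 1) N ≤ (T (N - 1)).card := hcard (N - 1)
    have h2 : N - 1 + 1 = N := Nat.succ_pred_eq_of_pos hNpos
    rw [h2, min_self] at h1
    have hle : (T (N - 1)).card ≤ N := by
      rw [← hN, ← Finset.card_univ]
      exact Finset.card_le_card (Finset.subset_univ _)
    exact Finset.eq_univ_of_card _ (by omega)
  have : j ∈ T (N - 1) := hfull ▸ Finset.mem_univ j
  exact (hmemT (N - 1) j).mp this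
end

section
/- Let n be a nonempty finite type. Let w : n → n → ℝ be a weight function with 0 ≤ w i j for all i, j and w i i = 0, whose graph is strongly connected, and let L be its Laplacian. Let γ : ℝ satisfy L i i ≤ γ for all i. Then the matrix A = γ • (1 : Matrix n n ℝ) - L is entrywise nonnegative (0 ≤ A i j for all i, j) and irreducible in the sense that for all i, j there exists k : ℕ with 0 < (A ^ k) i j. -/
open Matrix

/-- For the Laplacian `L` of a strongly connected weighted graph and any
`γ` dominating the diagonal of `L`, the matrix `γ • 1 - L` is entrywise nonnegative
and irreducible. -/
theorem smul_one_sub_laplacian_nonneg_irreducible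
    {n : Type*} [Fintype n] [Nonempty n] [DecidableEq n]
    (w : n → n → ℝ) (hw : ∀ i j, 0 ≤ w i j) (hdiag : ∀ i, w i i = 0)
    (hconn : ∀ i j, Relation.ReflTransGen (fun a b => 0 < w a b) i j)
    (L : Matrix n n ℝ)
    (hL : ∀ i j, L i j = if i = j then ∑ k, w i k else -(w i j))
    (γ : ℝ) (hγ : ∀ i, L i i ≤ γ)
    (A : Matrix n n ℝ) (hA : A = γ • (1 : Matrix n n ℝ) - L) :
    (∀ i j, 0 ≤ A i j) ∧ (∀ i j, ∃ k : ℕ, 0 < (A ^ k) i j) := by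
  have hAentry : ∀ i j, A i j = if i = j then γ - L i i else w i j := by
    intro i j
    by_cases h : i = j
    · subst h
      simp [hA, Matrix.sub_apply, Matrix.smul_apply, Matrix.one_apply]
    · simp [hA, Matrix.sub_apply, Matrix.smul_apply, Matrix.one_apply, h, hL i j]
  have hnonneg : ∀ i j, 0 ≤ A i j := by
    intro i j
    rw [hAentry]
    by_cases h : i = j
    · simp [h, sub_nonneg, hγ j]
    · simp [h, hw i j]
  refine ⟨hnonneg, ?_⟩
  have hpownn : ∀ k i j, 0 ≤ (A ^ k) i j := by
    intro k
    induction k with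
    | zero => intro i j; simp [Matrix.one_apply]; positivity
    | succ m ih =>
      intro i j
      rw [pow_succ, Matrix.mul_apply]
      exact Finset.sum_nonneg fun l _ => mul_nonneg (ih i l) (hnonneg l j)
  intro i j
  induction hconn i j with
  | refl => exact ⟨0, by simp⟩
  | @tail b c hab hb ih =>
    obtain ⟨k, hk⟩ := ih
    refine ⟨k + 1, ?_⟩
    have hbc : b ≠ c := by
      rintro rfl
      simp [hdiag b] at hb
    have hAbc : 0 < A b c := by rw [hAentry]; simpa [hbc] using hb
    rw [pow_succ, Matrix.mul_apply]
    have hterm : 0 < (A ^ k) i b * A b c := mul_pos hk hAbc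
    calc 0 < (A ^ k) i b * A b c := hterm
      _ ≤ ∑ l, (A ^ k) i l * A l c :=
        Finset.single_le_sum (f := fun l => (A ^ k) i l * A l c)
          (fun l _ => mul_nonneg (hpownn k i l) (hnonneg l c)) (Finset.mem_univ b)
end
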